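/- arXiv:1609.08311 — 3 statements merged into one kernel-verified Lean document; each statement's English description precedes it below -/
import Mathlib

section
/- Let r be a prime, let A be a noncyclic elementary abelian r-group acting on a (possibly infinite) group G, let θ be an A-signalizer functor on G, and let ψ be a subfunctor of θ, i.e., an A-signalizer functor on G with ψ(a) ≤ θ(a) for all a ∈ A∖{1}. Then ‖ψ‖ ≤ ‖θ‖, with equality if and only if ψ(a) = θ(a) for all a ∈ A∖{1}. -/
/-- The subgroup of fixed points of the action of `a` on `G`. -/
def fixedSub {A : Type*} (G : Type*) [Group A] [Group G] [MulDistribMulAction A G]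
    (a : A) : Subgroup G where
  carrier := {g : G | a • g = g}
  one_mem' := smul_one a
  mul_mem' := by
    intro x y hx hy
    simp only [Set.mem_setOf_eq] at *
    rw [smul_mul', hx, hy]
  inv_mem' := by
    intro x hx
    simp only [Set.mem_setOf_eq] at *
    rw [smul_inv', hx]

/-- The commutator `[G, A]` of a group `G` with a group `A` acting on it:
the subgroup generated by all `g⁻¹ • (a • g)`. -/
def actCommutator (A G : Type*) [Group A] [Group G] [MulDistribMulAction A G] :
    Subgroup G :=
  Subgroup.closure {x : G | ∃ (g : G) (a : A), x = g⁻¹ * (a • g)}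

/-- An elementary abelian `r`-group: an abelian group in which every element has
order dividing `r`. -/
def IsElementaryAbelian (r : ℕ) (A : Type*) [Group A] : Prop :=
  (∀ x y : A, x * y = y * x) ∧ ∀ a : A, a ^ r = 1

open Pointwise

/-- `θ` is a signalizer functor with respect to the subgroup `B` of `A`:
for each `b ∈ B∖{1}`, `θ b` is a finite `B`-invariant subgroup of `C_G(b)` of
order coprime to `|B|`, and `θ b ⊓ C_G(b') ≤ θ b'` for all `b, b' ∈ B∖{1}`. -/
def IsSignalizerFunctorOn {A G : Type*} [Group A] [Group G] [MulDistribMulAction A G]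
    (B : Subgroup A) (θ : A → Subgroup G) : Prop :=
  ∀ a ∈ B, a ≠ 1 →
    Finite (θ a) ∧ (∀ b ∈ B, b • θ a = θ a) ∧ θ a ≤ fixedSub G a ∧
      (Nat.card (θ a)).Coprime (Nat.card B) ∧
      ∀ b ∈ B, b ≠ 1 → θ a ⊓ fixedSub G b ≤ θ b

/-- `K` is a completion of the signalizer functor `θ` restricted to `B`:
`K` is a finite `B`-invariant subgroup of order coprime to `|B|` with
`C_K(b) = θ b` for all `b ∈ B∖{1}`. -/
def IsCompletionOn {A G : Type*} [Group A] [Group G] [MulDistribMulAction A G]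
    (B : Subgroup A) (θ : A → Subgroup G) (K : Subgroup G) : Prop :=
  Finite K ∧ (∀ b ∈ B, b • K = K) ∧ (Nat.card K).Coprime (Nat.card B) ∧
    ∀ b ∈ B, b ≠ 1 → K ⊓ fixedSub G b = θ b

/-- A `θ`-subgroup: a finite `A`-invariant subgroup `H` of order coprime to `|A|`
with `C_H(a) ≤ θ a` for all `a ∈ A∖{1}`. -/
def IsThetaSubgroup {A G : Type*} [Group A] [Group G] [MulDistribMulAction A G]
    (θ : A → Subgroup G) (H : Subgroup G) : Prop :=
  Finite H ∧ (∀ a : A, a • H = H) ∧ (Nat.card H).Coprime (Nat.card A) ∧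
    ∀ a : A, a ≠ 1 → H ⊓ fixedSub G a ≤ θ a

/-- `θ(B) = ⋂_{b ∈ B∖{1}} θ b`. -/
def thetaB {A G : Type*} [Group A] [Group G] [MulDistribMulAction A G]
    (θ : A → Subgroup G) (B : Subgroup A) : Subgroup G :=
  ⨅ (b : A) (_ : b ∈ B ∧ b ≠ 1), θ b

/-- `‖θ‖ = |θ(A)| · ∏_{B ∈ hyp(A)} [θ(B) : θ(A)]`, where `hyp(A)` is the set of
subgroups of `A` of index `r`. -/
noncomputable def signNorm {A G : Type*} [Group A] [Group G] [MulDistribMulAction A G]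
    (r : ℕ) (θ : A → Subgroup G) : ℕ :=
  Nat.card (thetaB θ ⊤) *
    ∏ᶠ (B : Subgroup A) (_ : B.index = r), (thetaB θ ⊤).relIndex (thetaB θ B)


namespace SigAux

open Pointwise

variable {A : Type*} [Group A] {V : Type*} [Group V]

/-- fixed points of a family of automorphisms indexed by a subgroup -/
def cent (φ : A →* MulAut V) (B : Subgroup A) : Subgroup V where
  carrier := {v | ∀ b ∈ B, φ b v = v}
  one_mem' := fun b _ => map_one (φ b)
  mul_mem' := fun {x y} hx hy b hb => by rw [map_mul, hx b hb, hy b hb]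
  inv_mem' := fun {x} hx b hb => by rw [map_inv, hx b hb]

lemma mem_cent {φ : A →* MulAut V} {B : Subgroup A} {v : V} :
    v ∈ cent φ B ↔ ∀ b ∈ B, φ b v = v := Iff.rfl

lemma aut_inv_apply (φ : A →* MulAut V) (a : A) (v : V) : φ a⁻¹ (φ a v) = v := by
  rw [← MulAut.mul_apply, ← map_mul, inv_mul_cancel, map_one]
  rfl

lemma aut_inv_apply' (φ : A →* MulAut V) (a : A) (v : V) : φ a (φ a⁻¹ v) = v := by
  rw [← MulAut.mul_apply, ← map_mul, mul_inv_cancel, map_one]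
  rfl

/-- restrict automorphisms to an invariant subgroup -/
def restrictAut (φ : A →* MulAut V) (H : Subgroup V) (hinv : ∀ a, ∀ v ∈ H, φ a v ∈ H) :
    A →* MulAut ↥H where
  toFun a :=
    { toFun := fun v => ⟨φ a ↑v, hinv a ↑v v.2⟩
      invFun := fun v => ⟨φ a⁻¹ ↑v, hinv a⁻¹ ↑v v.2⟩
      left_inv := fun v => by
        ext
        exact aut_inv_apply φ a ↑v
      right_inv := fun v => by
        ext
        exact aut_inv_apply' φ a ↑v
      map_mul' := fun v w => by
        ext
        exact map_mul (φ a) ↑v ↑w }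
  map_one' := by
    ext v
    show φ 1 ↑v = ↑v
    rw [map_one]; rfl
  map_mul' := fun a b => by
    ext v
    show φ (a * b) ↑v = φ a (φ b ↑v)
    rw [map_mul]
    rfl

@[simp] lemma restrictAut_apply (φ : A →* MulAut V) (H : Subgroup V)
    (hinv : ∀ a, ∀ v ∈ H, φ a v ∈ H) (a : A) (v : ↥H) :
    ↑(restrictAut φ H hinv a v) = φ a ↑v := rfl

section Quot

variable (φ : A →* MulAut V) (N : Subgroup V) [N.Normal]
  (hinv : ∀ a, ∀ v ∈ N, φ a v ∈ N)

/-- auxiliary quotient hom -/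
def qaux (a : A) : (V ⧸ N) →* (V ⧸ N) :=
  QuotientGroup.map N N (φ a).toMonoidHom (fun v hv => hinv a v hv)

lemma qaux_mk (a : A) (v : V) : qaux φ N hinv a (↑v : V ⧸ N) = ↑(φ a v) :=
  QuotientGroup.map_mk N N _ _ v

/-- descend automorphisms to quotient by an invariant normal subgroup -/
def quotAut : A →* MulAut (V ⧸ N) where
  toFun a := MonoidHom.toMulEquiv (qaux φ N hinv a) (qaux φ N hinv a⁻¹)
    (by
      refine MonoidHom.ext fun z => ?_
      induction z using QuotientGroup.induction_on with
      | H v =>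
        rw [MonoidHom.comp_apply, qaux_mk, qaux_mk, aut_inv_apply, MonoidHom.id_apply])
    (by
      refine MonoidHom.ext fun z => ?_
      induction z using QuotientGroup.induction_on with
      | H v =>
        rw [MonoidHom.comp_apply, qaux_mk, qaux_mk, aut_inv_apply', MonoidHom.id_apply])
  map_one' := by
    ext z
    induction z using QuotientGroup.induction_on with
    | H v =>
      show qaux φ N hinv 1 (↑v) = ↑v
      rw [qaux_mk, map_one]
      rfl
  map_mul' := fun a b => by
    ext z
    induction z using QuotientGroup.induction_on with
    | H v =>
      show qaux φ N hinv (a * b) (↑v) = qaux φ N hinv a (qaux φ N hinv b ↑v)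
      rw [qaux_mk, qaux_mk, qaux_mk, map_mul]
      rfl

@[simp] lemma quotAut_mk (a : A) (v : V) :
    quotAut φ N hinv a (↑v : V ⧸ N) = ↑(φ a v) :=
  qaux_mk φ N hinv a v

end Quot

lemma isPGroup_of_exp {r : ℕ} (he : ∀ a : A, a ^ r = 1) : IsPGroup r A :=
  fun a => ⟨1, by rw [pow_one]; exact he a⟩

end SigAux
section Chunk2

namespace SigAux

open Pointwise

variable {A : Type*} [Group A] {V : Type*} [Group V]

lemma subgroup_eq_of_le_of_card_le {G : Type*} [Group G] {H K : Subgroup G} [Finite ↥K]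
    (h : H ≤ K) (hc : Nat.card ↥K ≤ Nat.card ↥H) : H = K := by
  have hfin : (K : Set G).Finite := Set.toFinite _
  apply SetLike.coe_injective
  refine Set.eq_of_subset_of_ncard_le h ?_ hfin
  rwa [← Nat.card_coe_set_eq, ← Nat.card_coe_set_eq]

lemma mem_of_pow_mem {G : Type*} [Group G] [Finite G] {K : Subgroup G} {r : ℕ}
    (hco : (Nat.card G).Coprime r) {v : G} (hv : v ^ r ∈ K) : v ∈ K := by
  set o := orderOf v with ho'
  have ho : o ∣ Nat.card G := orderOf_dvd_natCard v
  have hco' : o.Coprime r := Nat.Coprime.coprime_dvd_left ho hco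
  rcases eq_or_ne o 1 with h1 | h1
  · have hv1 : v = 1 := orderOf_eq_one_iff.mp h1
    rw [hv1]; exact one_mem K
  · have hpos : 0 < o := ho'.symm ▸ orderOf_pos v
    have hlt : 1 < o := by omega
    obtain ⟨s, -, hs⟩ := Nat.exists_mul_mod_eq_one_of_coprime hco'.symm hlt
    have h2 : v ^ (r * s) = v := by
      rw [← pow_mod_orderOf, ← ho', hs, pow_one]
    have h3 := pow_mem hv s
    rw [← pow_mul] at h3
    rwa [h2] at h3

lemma exists_lift_cent {r : ℕ} (hr : r.Prime) [Finite V] (φ : A →* MulAut V)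
    (N : Subgroup V) [N.Normal] (hinv : ∀ a, ∀ v ∈ N, φ a v ∈ N)
    (B : Subgroup A) (hB : IsPGroup r ↥B) (hN : ¬ r ∣ Nat.card ↥N) (x : V)
    (hx : ∀ b ∈ B, quotAut φ N hinv b (↑x : V ⧸ N) = ↑x) :
    ∃ y : V, (↑y : V ⧸ N) = (↑x : V ⧸ N) ∧ ∀ b ∈ B, φ b y = y := by
  haveI := Fact.mk hr
  let S := {v : V // (↑v : V ⧸ N) = (↑x : V ⧸ N)}
  letI : MulAction ↥B S :=
    { smul := fun b v => ⟨φ ↑b ↑v, by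
        have h1 : ((φ ↑b ↑v : V) : V ⧸ N) = quotAut φ N hinv ↑b ((↑v : V) : V ⧸ N) :=
          (quotAut_mk φ N hinv ↑b ↑v).symm
        rw [h1, v.2, hx ↑b b.2]⟩
      one_smul := fun v => Subtype.ext (by
        show φ ↑(1 : ↥B) ↑v = ↑v
        rw [OneMemClass.coe_one, map_one, MulAut.one_apply])
      mul_smul := fun b c v => Subtype.ext (by
        show φ ↑(b * c) ↑v = φ ↑b (φ ↑c ↑v)
        rw [MulMemClass.coe_mul, map_mul, MulAut.mul_apply]) }
  have e : ↥N ≃ S := {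
    toFun := fun n => ⟨x * ↑n, by
      have h1 : ((x * ↑n : V) : V ⧸ N) = (↑x : V ⧸ N) * (↑(↑n : V) : V ⧸ N) :=
        rfl
      rw [h1, show ((↑n : V) : V ⧸ N) = 1 from (QuotientGroup.eq_one_iff _).mpr n.2, mul_one]⟩
    invFun := fun v => ⟨x⁻¹ * ↑v, QuotientGroup.eq.mp v.2.symm⟩
    left_inv := fun n => Subtype.ext (by simp)
    right_inv := fun v => Subtype.ext (by simp) }
  have hcard : Nat.card S = Nat.card ↥N := Nat.card_congr e.symm
  obtain ⟨⟨y, hy⟩, hfix⟩ :=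
    hB.nonempty_fixed_point_of_prime_not_dvd_card S (by rwa [hcard])
  refine ⟨y, hy, fun b hb => ?_⟩
  have h2 := MulAction.mem_fixedPoints.mp hfix ⟨b, hb⟩
  exact congrArg Subtype.val h2

end SigAux
end Chunk2
namespace SigAux

open Pointwise

variable {A : Type*} [Group A] {V : Type*} [Group V]

lemma orderOf_eq_prime_of_exp {r : ℕ} (hr : r.Prime) {a : A} (he : a ^ r = 1)
    (ha : a ≠ 1) : orderOf a = r :=
  (hr.eq_one_or_self_of_dvd _ (orderOf_dvd_of_pow_eq_one he)).resolve_left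
    (fun h => ha (orderOf_eq_one_iff.mp h))

/-- every nontrivial finite abelian group of exponent `r` has a subgroup of index `r` -/
lemma exists_index_r {r : ℕ} (hr : r.Prime) [Finite A]
    (hcA : ∀ x y : A, x * y = y * x) (heA : ∀ a : A, a ^ r = 1) (hnt : Nontrivial A) :
    ∃ H : Subgroup A, H.index = r := by
  classical
  obtain ⟨a, ha⟩ := exists_ne (1 : A)
  have hfin : ({B : Subgroup A | a ∉ B}).Finite := Set.toFinite _
  have hne : ({B : Subgroup A | a ∉ B}).Nonempty := ⟨⊥, by simpa [Subgroup.mem_bot] using ha⟩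
  obtain ⟨M, hM, hmax⟩ : ∃ M ∈ {B : Subgroup A | a ∉ B}, ∀ M' ∈ {B : Subgroup A | a ∉ B},
      id M ≤ id M' → id M = id M' := by
    obtain ⟨M, hM⟩ := hfin.exists_maximal hne
    exact ⟨M, hM.1, fun M' hM' hle => le_antisymm hle (hM.2 hM' hle)⟩
  simp only [id] at hmax
  haveI : M.Normal := ⟨fun n hn g => by simpa [hcA g n, mul_assoc] using hn⟩
  have haM : a ∉ M := hM
  set π := QuotientGroup.mk' M with hπ
  have hπmk : ∀ x : A, π x = QuotientGroup.mk x := fun x => rfl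
  have hone : ∀ x : A, π x = 1 ↔ x ∈ M := fun x => QuotientGroup.eq_one_iff x
  have hane : π a ≠ 1 := fun h => haM ((hone a).mp h)
  have hexpQ : ∀ z : A ⧸ M, z ^ r = 1 := by
    intro z
    obtain ⟨x, rfl⟩ := QuotientGroup.mk'_surjective M z
    rw [← map_pow, heA, map_one]
  -- every element of the quotient is a power of π a
  have hgen : ∀ z : A ⧸ M, z ∈ Subgroup.zpowers (π a) := by
    intro z
    obtain ⟨x, rfl⟩ := QuotientGroup.mk'_surjective M z
    by_cases hx : x ∈ M
    · rw [show π x = 1 from (hone x).mpr hx]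
      exact one_mem _
    · -- maximality: a ∈ M ⊔ zpowers x
      have hxa : a ∈ M ⊔ Subgroup.zpowers x := by
        by_contra hcon
        have h1 : M ≤ M ⊔ Subgroup.zpowers x := le_sup_left
        have h2 := hmax _ hcon h1
        exact hx (by rw [h2]; exact (le_sup_right : Subgroup.zpowers x ≤ _) (Subgroup.mem_zpowers x))
      have hmap : π a ∈ Subgroup.map π (M ⊔ Subgroup.zpowers x) :=
        Subgroup.mem_map_of_mem π hxa
      rw [Subgroup.map_sup] at hmap
      have hmapM : Subgroup.map π M = ⊥ := by
        rw [eq_bot_iff]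
        rintro _ ⟨m, hm, rfl⟩
        simpa [Subgroup.mem_bot] using (hone m).mpr hm
      rw [hmapM, MonoidHom.map_zpowers, bot_sup_eq] at hmap
      -- now π a ∈ zpowers (π x); conclude π x ∈ zpowers (π a)
      have hxne : π x ≠ 1 := fun h => hx ((hone x).mp h)
      have hordx : orderOf (π x) = r := orderOf_eq_prime_of_exp hr (hexpQ _) hxne
      have horda : orderOf (π a) = r := orderOf_eq_prime_of_exp hr (hexpQ _) hane
      have hle : Subgroup.zpowers (π a) ≤ Subgroup.zpowers (π x) :=
        (Subgroup.zpowers_le).mpr hmap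
      have heq := subgroup_eq_of_le_of_card_le hle
        (by rw [Nat.card_zpowers, Nat.card_zpowers, hordx, horda])
      rw [heq]
      exact Subgroup.mem_zpowers _
  have hcard : Nat.card (A ⧸ M) = r := by
    rw [← orderOf_eq_card_of_forall_mem_zpowers hgen,
      orderOf_eq_prime_of_exp hr (hexpQ _) hane]
  exact ⟨M, by rw [Subgroup.index_eq_card, hcard]⟩

end SigAux
namespace SigAux

open Pointwise

universe u v

lemma genAb_rank2 {r : ℕ} (hr : r.Prime) (A : Type u) [Group A] [Finite A]
    (hcA : ∀ x y : A, x * y = y * x) (heA : ∀ a : A, a ^ r = 1)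
    (hA2 : Nat.card A = r * r)
    (V : Type v) [Group V] [Finite V] (hcV : ∀ x y : V, x * y = y * x)
    (φ : A →* MulAut V) (hco : (Nat.card V).Coprime r) :
    (⨆ (B : Subgroup A) (_ : B.index = r), cent φ B) = ⊤ := by
  classical
  letI : CommMonoid V := { (inferInstance : Monoid V) with mul_comm := hcV }
  letI : Fintype A := Fintype.ofFinite A
  letI : Fintype (Subgroup A) := Fintype.ofFinite _
  haveI := Fact.mk hr
  have hr2 : 2 ≤ r := hr.two_le
  have hnt : Nontrivial A := by
    apply Finite.one_lt_card_iff_nontrivial.mp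
    rw [hA2]; nlinarith
  set K := ⨆ (B : Subgroup A) (_ : B.index = r), cent φ B with hK
  have hle : ∀ B : Subgroup A, B.index = r → cent φ B ≤ K := fun B hB =>
    le_iSup_of_le B (le_iSup_of_le hB le_rfl)
  have horder : ∀ c : A, c ≠ 1 → orderOf c = r := fun c hc =>
    orderOf_eq_prime_of_exp hr (heA c) hc
  have hzidx : ∀ c : A, c ≠ 1 → (Subgroup.zpowers c).index = r := by
    intro c hc
    have h1 : Nat.card ↥(Subgroup.zpowers c) = r := by
      rw [Nat.card_zpowers, horder c hc]
    have h2 := Subgroup.card_mul_index (Subgroup.zpowers c)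
    rw [h1, hA2] at h2
    exact Nat.eq_of_mul_eq_mul_left (by omega) h2
  have hcardB : ∀ B : Subgroup A, B.index = r → Nat.card ↥B = r := by
    intro B hB
    have h2 := Subgroup.card_mul_index B
    rw [hB, hA2] at h2
    exact Nat.eq_of_mul_eq_mul_right (by omega) h2
  have huniq : ∀ B : Subgroup A, B.index = r → ∀ c : A, c ≠ 1 → c ∈ B →
      B = Subgroup.zpowers c := by
    intro B hB c hc hcB
    have hle' : Subgroup.zpowers c ≤ B := (Subgroup.zpowers_le).mpr hcB
    exact (subgroup_eq_of_le_of_card_le hle'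
      (by rw [hcardB B hB, Nat.card_zpowers, horder c hc])).symm
  set t : Finset (Subgroup A) := Finset.univ.filter (fun B => B.index = r) with ht
  have hmem_t : ∀ B, B ∈ t ↔ B.index = r := fun B => by simp [ht]
  have hfilter : ∀ c : A, c ≠ 1 → t.filter (fun B => c ∈ B) = {Subgroup.zpowers c} := by
    intro c hc
    apply Finset.eq_singleton_iff_unique_mem.mpr
    constructor
    · rw [Finset.mem_filter]
      exact ⟨(hmem_t _).mpr (hzidx c hc), Subgroup.mem_zpowers c⟩
    · intro B hB
      rw [Finset.mem_filter] at hB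
      exact huniq B ((hmem_t _).mp hB.1) c hc hB.2
  -- counting: t.card = r + 1
  have hcount : ∑ c ∈ Finset.univ.erase (1 : A), (t.filter (fun B => c ∈ B)).card
      = ∑ B ∈ t, ((Finset.univ.erase (1 : A)).filter (fun c => c ∈ B)).card := by
    simp_rw [Finset.card_filter]
    rw [Finset.sum_comm]
  have hLHS : ∑ c ∈ Finset.univ.erase (1 : A), (t.filter (fun B => c ∈ B)).card
      = r * r - 1 := by
    rw [Finset.sum_congr rfl (fun c hc => by
      rw [hfilter c (Finset.ne_of_mem_erase hc), Finset.card_singleton])]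
    rw [Finset.sum_const, smul_eq_mul, mul_one, Finset.card_erase_of_mem (Finset.mem_univ 1),
      Finset.card_univ, show Fintype.card A = r * r from by rw [← Nat.card_eq_fintype_card, hA2]]
  have hRHS : ∑ B ∈ t, ((Finset.univ.erase (1 : A)).filter (fun c => c ∈ B)).card
      = t.card * (r - 1) := by
    rw [Finset.sum_congr rfl (fun B hB => ?_), Finset.sum_const, smul_eq_mul]
    rw [Finset.filter_erase, Finset.card_erase_of_mem
      (Finset.mem_filter.mpr ⟨Finset.mem_univ _, one_mem B⟩)]
    congr 1
    rw [← Fintype.card_subtype, ← Nat.card_eq_fintype_card]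
    exact hcardB B ((hmem_t _).mp hB)
  have htc : t.card = r + 1 := by
    have h12 : t.card * (r - 1) = r * r - 1 := by rw [← hRHS, ← hcount, hLHS]
    obtain ⟨m, rfl⟩ : ∃ m, r = m + 2 := ⟨r - 2, by omega⟩
    have hkey : (m + 2) * (m + 2) = (m + 3) * (m + 1) + 1 := by ring
    have hm1 : m + 2 - 1 = m + 1 := by omega
    rw [hm1] at h12
    rw [hkey, Nat.add_sub_cancel] at h12
    have := Nat.eq_of_mul_eq_mul_right (show 0 < m + 1 by omega) h12
    omega
  -- the trace argument
  rw [eq_top_iff]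
  intro v _
  have htrace : ∀ (s : Finset A) (b' : A), (∀ b ∈ s, b' * b ∈ s) →
      (∀ b ∈ s, b'⁻¹ * b ∈ s) →
      φ b' (∏ b ∈ s, φ b v) = ∏ b ∈ s, φ b v := by
    intro s b' hmem hmem'
    rw [map_prod]
    exact Finset.prod_nbij' (fun b => b' * b) (fun b => b'⁻¹ * b)
      hmem hmem' (fun a _ => by group) (fun a _ => by group)
      (fun a _ => by rw [map_mul, MulAut.mul_apply])
  set P := ∏ B ∈ t, ∏ b ∈ Finset.univ.filter (fun b => b ∈ B), φ b v with hPdef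
  have hPK : P ∈ K := by
    refine prod_mem (fun B hB => hle B ((hmem_t _).mp hB) ?_)
    intro b' hb'
    exact htrace _ b'
      (fun b hb => Finset.mem_filter.mpr ⟨Finset.mem_univ _,
        mul_mem hb' (Finset.mem_filter.mp hb).2⟩)
      (fun b hb => Finset.mem_filter.mpr ⟨Finset.mem_univ _,
        mul_mem (inv_mem hb') (Finset.mem_filter.mp hb).2⟩)
  have hswap : P = ∏ c ∈ Finset.univ,
      (φ c v) ^ ((t.filter (fun B => c ∈ B)).card) := by
    rw [hPdef]
    simp_rw [Finset.prod_filter]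
    rw [Finset.prod_comm]
    exact Finset.prod_congr rfl (fun c _ => by rw [← Finset.prod_filter, Finset.prod_const])
  have hφ1 : φ (1 : A) v = v := by rw [map_one]; rfl
  set TrA := ∏ c ∈ Finset.univ, φ c v with hTrA
  have hsplit : P = v ^ t.card * ∏ c ∈ Finset.univ.erase 1, φ c v := by
    rw [hswap, ← Finset.mul_prod_erase Finset.univ _ (Finset.mem_univ (1 : A))]
    rw [Finset.filter_true_of_mem (fun B _ => one_mem B), hφ1]
    congr 1
    exact Finset.prod_congr rfl (fun c hc => by
      rw [hfilter c (Finset.ne_of_mem_erase hc), Finset.card_singleton, pow_one])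
  have hTrAsplit : TrA = v * ∏ c ∈ Finset.univ.erase 1, φ c v := by
    rw [hTrA, ← Finset.mul_prod_erase Finset.univ _ (Finset.mem_univ (1 : A)), hφ1]
  have hTrAfix : ∀ B ∈ t, TrA ∈ cent φ B := by
    intro B _ b' _
    exact htrace Finset.univ b' (fun b _ => Finset.mem_univ _) (fun b _ => Finset.mem_univ _)
  obtain ⟨c0, hc0⟩ := exists_ne (1 : A)
  have hB0 : Subgroup.zpowers c0 ∈ t := (hmem_t _).mpr (hzidx c0 hc0)
  have hTrAK : TrA ∈ K := hle _ ((hmem_t _).mp hB0) (hTrAfix _ hB0)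
  have hvr : v ^ r = P * TrA⁻¹ := by
    rw [hsplit, htc, hTrAsplit, pow_succ]
    group
  have hvK : v ^ r ∈ K := by
    rw [hvr]
    exact mul_mem hPK (inv_mem hTrAK)
  exact mem_of_pow_mem hco hvK

end SigAux
namespace SigAux

open Pointwise

universe u v

lemma genAb {r : ℕ} (hr : r.Prime) :
    ∀ (k : ℕ) (A : Type u) [Group A] [Finite A], Nat.card A ≤ k →
      (∀ x y : A, x * y = y * x) → (∀ a : A, a ^ r = 1) → Nontrivial A →
      ∀ (V : Type v) [Group V] [Finite V], (∀ x y : V, x * y = y * x) →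
      ∀ (φ : A →* MulAut V), (Nat.card V).Coprime r →
      (⨆ (B : Subgroup A) (_ : B.index = r), cent φ B) = ⊤ := by
  intro k
  induction k with
  | zero =>
    intro A _ _ hcard _ _ _
    exact absurd hcard (by have := Nat.card_pos (α := A); omega)
  | succ k ih =>
    intro A _ _ hcard hcA heA hnt V _ _ hcV φ hco
    classical
    haveI := Fact.mk hr
    have hr2 : 2 ≤ r := hr.two_le
    set K := ⨆ (B : Subgroup A) (_ : B.index = r), cent φ B with hK
    have hle : ∀ B : Subgroup A, B.index = r → cent φ B ≤ K := fun B hB =>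
      le_iSup_of_le B (le_iSup_of_le hB le_rfl)
    by_cases hcyc : IsCyclic A
    · -- cyclic case: card A = r and ⊥ works
      obtain ⟨g, hg⟩ := hcyc.exists_generator
      have hgne : g ≠ 1 := by
        rintro rfl
        obtain ⟨x, hx⟩ := exists_ne (1 : A)
        obtain ⟨i, hi⟩ := hg x
        apply hx
        rw [← hi]
        simp
      have hcardA : Nat.card A = r := by
        rw [← orderOf_eq_card_of_forall_mem_zpowers hg,
          orderOf_eq_prime_of_exp hr (heA g) hgne]
      have hbot : (⊥ : Subgroup A).index = r := by rw [Subgroup.index_bot, hcardA]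
      have hcentbot : cent φ (⊥ : Subgroup A) = ⊤ := by
        rw [eq_top_iff]
        intro v _ b hb
        rw [Subgroup.mem_bot] at hb
        rw [hb, map_one, MulAut.one_apply]
      rw [eq_top_iff, ← hcentbot]
      exact hle ⊥ hbot
    · have hpA : IsPGroup r A := isPGroup_of_exp heA
      obtain ⟨n, hn⟩ := hpA.exists_card_eq
      have hn2 : 2 ≤ n := by
        by_contra h
        push_neg at h
        interval_cases n
        · rw [pow_zero] at hn
          exact (Finite.one_lt_card_iff_nontrivial.mpr hnt).ne' hn
        · exact hcyc (isCyclic_of_prime_card (by rw [hn, pow_one]))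
      by_cases hA2 : Nat.card A = r * r
      · exact genAb_rank2 hr A hcA heA hA2 V hcV φ hco
      · -- card A = r^n with n ≥ 3
        have hn3 : 3 ≤ n := by
          rcases Nat.lt_or_ge n 3 with h3 | h3
          · interval_cases n
            · exact absurd (by rw [hn, pow_two]) hA2
          · exact h3
        have hlt : r * r < Nat.card A := by
          calc r * r = r ^ 2 := (pow_two r).symm
          _ < r ^ n := Nat.pow_lt_pow_right hr.one_lt (by omega)
          _ = Nat.card A := hn.symm
        obtain ⟨H, hH⟩ := exists_index_r hr hcA heA hnt
        have hcardH : Nat.card ↥H * r = Nat.card A := by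
          rw [← hH]; exact Subgroup.card_mul_index H
        have hHpos : 0 < Nat.card ↥H := Nat.card_pos
        have hHlt : Nat.card ↥H < Nat.card A := by nlinarith
        have hHle : Nat.card ↥H ≤ k := by omega
        have hHnt : Nontrivial ↥H := by
          apply Finite.one_lt_card_iff_nontrivial.mp
          nlinarith
        have hgenH := ih ↥H hHle
          (fun x y => Subtype.ext (hcA ↑x ↑y))
          (fun a => Subtype.ext (by
            push_cast
            exact heA ↑a))
          hHnt V hcV (φ.comp H.subtype) hco
        rw [eq_top_iff, ← hgenH]
        refine iSup_le fun B' => iSup_le fun hB' => ?_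
        set B2 : Subgroup A := B'.map H.subtype with hB2def
        have hB2le : B2 ≤ H := Subgroup.map_subtype_le B'
        have hB2idx : B2.index = r * r := by
          have h1 := Subgroup.relIndex_mul_index hB2le
          have h2 : B2.relIndex H = B'.index := by
            have : B2.subgroupOf H = B' :=
              Subgroup.comap_map_eq_self_of_injective H.subtype_injective B'
            rw [Subgroup.relIndex, this]
          rw [h2, hB', hH] at h1
          exact h1.symm
        have hcent_eq : cent (φ.comp H.subtype) B' = cent φ B2 := by
          ext w
          constructor
          · intro hw b hb
            obtain ⟨b', hb', rfl⟩ := hb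
            exact hw b' hb'
          · intro hw b' hb'
            exact hw ↑b' ⟨b', hb', rfl⟩
        rw [hcent_eq]
        -- now show cent φ B2 ≤ K using the quotient action
        have hWinv : ∀ a : A, ∀ w ∈ cent φ B2, φ a w ∈ cent φ B2 := by
          intro a w hw b hb
          rw [← MulAut.mul_apply, ← map_mul, hcA b a, map_mul, MulAut.mul_apply, hw b hb]
        set W := cent φ B2 with hWdef
        set ρ := restrictAut φ W hWinv with hρ
        haveI : B2.Normal := ⟨fun x hx g => by simpa [hcA g x, mul_assoc] using hx⟩
        have hker : ∀ b ∈ B2, ρ b = 1 := by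
          intro b hb
          ext w
          rw [MulAut.one_apply]
          show φ b ↑w = ↑w
          exact w.2 b hb
        set ρq : (A ⧸ B2) →* MulAut ↥W :=
          QuotientGroup.lift B2 ρ (fun b hb => hker b hb) with hρq
        have hcardQ : Nat.card (A ⧸ B2) = r * r := by
          rw [← Subgroup.index_eq_card, hB2idx]
        have hQle : Nat.card (A ⧸ B2) ≤ k := by omega
        have hQnt : Nontrivial (A ⧸ B2) := by
          apply Finite.one_lt_card_iff_nontrivial.mp
          rw [hcardQ]; nlinarith
        have hQcomm : ∀ x y : A ⧸ B2, x * y = y * x := by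
          intro x y
          induction x using QuotientGroup.induction_on with
          | H a =>
            induction y using QuotientGroup.induction_on with
            | H b =>
              rw [← QuotientGroup.mk_mul, ← QuotientGroup.mk_mul, hcA a b]
        have hQexp : ∀ x : A ⧸ B2, x ^ r = 1 := by
          intro x
          induction x using QuotientGroup.induction_on with
          | H a =>
            rw [← QuotientGroup.mk_pow, heA]
            rfl
        have hcoW : (Nat.card ↥W).Coprime r :=
          Nat.Coprime.coprime_dvd_left (Subgroup.card_subgroup_dvd_card W) hco
        have hgenW := ih (A ⧸ B2) hQle hQcomm hQexp hQnt ↥W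
          (fun x y => Subtype.ext (hcV ↑x ↑y)) ρq hcoW
        -- push down
        have h1 : Subgroup.map W.subtype ⊤ = W := by
          rw [← MonoidHom.range_eq_map]
          exact Subgroup.subtype_range W
        have h2 : W ≤ K := by
          rw [← h1, ← hgenW]
          simp only [Subgroup.map_iSup]
          refine iSup_le fun Bq => iSup_le fun hBq => ?_
          have hcidx : (Subgroup.comap (QuotientGroup.mk' B2) Bq).index = r := by
            rw [Subgroup.index_comap_of_surjective _ (QuotientGroup.mk'_surjective B2), hBq]
          refine le_trans ?_ (hle _ hcidx)
          rintro x ⟨w, hw, rfl⟩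
          intro c hc
          have h3 : ρq ((QuotientGroup.mk' B2) c) w = w := hw _ hc
          have h4 : ρ c w = w := by
            have h5 : ρq ((QuotientGroup.mk' B2) c) = ρ c := rfl
            rwa [h5] at h3
          exact congrArg Subtype.val h4
        exact h2

end SigAux
namespace SigAux

open Pointwise

universe u v

lemma genFull {r : ℕ} (hr : r.Prime) {A : Type u} [Group A] [Finite A]
    (hcA : ∀ x y : A, x * y = y * x) (heA : ∀ a : A, a ^ r = 1)
    (hnt : Nontrivial A) :
    ∀ (k : ℕ) (X : Type v) [Group X] [Finite X] (φ : A →* MulAut X),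
      Nat.card X ≤ k → (Nat.card X).Coprime r →
      (⨆ (B : Subgroup A) (_ : B.index = r), cent φ B) = ⊤ := by
  intro k
  induction k with
  | zero =>
    intro X _ _ φ hcard _
    exact absurd hcard (by have := Nat.card_pos (α := X); omega)
  | succ k ih =>
    intro X _ _ φ hcard hco
    classical
    haveI := Fact.mk hr
    have hpA : IsPGroup r A := isPGroup_of_exp heA
    set K := ⨆ (B : Subgroup A) (_ : B.index = r), cent φ B with hK
    have hle : ∀ B : Subgroup A, B.index = r → cent φ B ≤ K := fun B hB =>
      le_iSup_of_le B (le_iSup_of_le hB le_rfl)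
    by_cases hXtriv : Subsingleton X
    · rw [eq_top_iff]
      intro x _
      rw [Subsingleton.elim x 1]
      exact one_mem K
    haveI hXnt : Nontrivial X := not_subsingleton_iff_nontrivial.mp hXtriv
    have hrX : ¬ r ∣ Nat.card X := by
      intro hdvd
      have h1 : r ∣ Nat.gcd (Nat.card X) r := Nat.dvd_gcd hdvd dvd_rfl
      rw [hco] at h1
      exact hr.one_lt.ne' (Nat.eq_one_of_dvd_one h1)
    by_cases hpg : ∃ q : ℕ, q.Prime ∧ IsPGroup q X
    · -- q-group case
      obtain ⟨q, hq, hqX⟩ := hpg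
      haveI := Fact.mk hq
      set Z := Subgroup.center X with hZ
      haveI hZnt : Nontrivial ↥Z := hqX.center_nontrivial
      have hZinv : ∀ a : A, ∀ v ∈ Z, φ a v ∈ Z := by
        intro a v hv
        rw [Subgroup.mem_center_iff]
        intro g
        have h1 : g = φ a (φ a⁻¹ g) := (aut_inv_apply' φ a g).symm
        rw [h1, ← map_mul, ← map_mul, (Subgroup.mem_center_iff.mp hv (φ a⁻¹ g))]
      have hZcomm : ∀ x y : ↥Z, x * y = y * x := fun x y =>
        Subtype.ext (Subgroup.mem_center_iff.mp y.2 ↑x)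
      have hZle : Z ≤ K := by
        have hgenZ := genAb hr (Nat.card A) A le_rfl hcA heA hnt ↥Z hZcomm
          (restrictAut φ Z hZinv)
          (Nat.Coprime.coprime_dvd_left (Subgroup.card_subgroup_dvd_card Z) hco)
        have h1 : Subgroup.map Z.subtype ⊤ = Z := by
          rw [← MonoidHom.range_eq_map]
          exact Subgroup.subtype_range Z
        rw [← h1, ← hgenZ]
        simp only [Subgroup.map_iSup]
        refine iSup_le fun B => iSup_le fun hB => ?_
        refine le_trans ?_ (hle B hB)
        rintro x ⟨w, hw, rfl⟩
        intro b hb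
        exact congrArg Subtype.val (hw b hb)
      by_cases hZtop : Z = ⊤
      · -- X abelian
        have hXcomm : ∀ x y : X, x * y = y * x := by
          intro x y
          have : y ∈ Z := by rw [hZtop]; trivial
          exact (Subgroup.mem_center_iff.mp this x)
        exact genAb hr (Nat.card A) A le_rfl hcA heA hnt X hXcomm φ hco
      · -- proper center, use quotient
        have hZcard : 1 < Nat.card ↥Z := Finite.one_lt_card_iff_nontrivial.mpr hZnt
        have hXq : Nat.card X = Nat.card (X ⧸ Z) * Nat.card ↥Z :=
          Subgroup.card_eq_card_quotient_mul_card_subgroup Z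
        have hQpos : 0 < Nat.card (X ⧸ Z) := Nat.card_pos
        have hXpos : 0 < Nat.card X := Nat.card_pos
        have hQlt : Nat.card (X ⧸ Z) < Nat.card X := by nlinarith
        have hQle : Nat.card (X ⧸ Z) ≤ k := by omega
        have hQdvd : Nat.card (X ⧸ Z) ∣ Nat.card X := ⟨Nat.card ↥Z, hXq⟩
        have hcoQ : (Nat.card (X ⧸ Z)).Coprime r :=
          Nat.Coprime.coprime_dvd_left hQdvd hco
        set φq := quotAut φ Z hZinv with hφq
        have hgenQ := ih (X ⧸ Z) φq hQle hcoQ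
        -- lift: cent φq B ≤ map mk' (cent φ B)
        have hlift : ∀ B : Subgroup A, B.index = r →
            cent φq B ≤ Subgroup.map (QuotientGroup.mk' Z) (cent φ B) := by
          intro B _
          intro z hz
          obtain ⟨x, rfl⟩ := QuotientGroup.mk'_surjective Z z
          obtain ⟨y, hy1, hy2⟩ := exists_lift_cent hr φ Z hZinv B (hpA.to_subgroup B)
            (fun hdvd => hrX (hdvd.trans (Subgroup.card_subgroup_dvd_card Z)))
            x (fun b hb => hz b hb)
          exact ⟨y, hy2, hy1⟩
        have htop : Subgroup.map (QuotientGroup.mk' Z) K = ⊤ := by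
          rw [eq_top_iff, ← hgenQ]
          refine iSup_le fun B => iSup_le fun hB => ?_
          exact le_trans (hlift B hB) (Subgroup.map_mono (hle B hB))
        have hcomap := congrArg (Subgroup.comap (QuotientGroup.mk' Z)) htop
        rw [Subgroup.comap_map_eq, QuotientGroup.ker_mk'] at hcomap
        rw [Subgroup.comap_top] at hcomap
        -- hcomap : K ⊔ Z = ⊤
        rw [eq_top_iff, ← hcomap]
        exact sup_le le_rfl hZle
    · -- not a q-group: Sylow argument
      push_neg at hpg
      letI : MulDistribMulAction A X := MulDistribMulAction.compHom X φ
      have hsmul_eq : ∀ (a : A) (x : X), a • x = φ a x := fun a x => rfl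
      have hXpos : 0 < Nat.card X := Nat.card_pos
      have hKpos : 0 < Nat.card ↥K := Nat.card_pos
      have hdvd : Nat.card X ∣ Nat.card ↥K := by
        rw [← Nat.factorization_le_iff_dvd hXpos.ne' hKpos.ne']
        intro q
        by_cases hq : q.Prime
        swap
        · rw [Nat.factorization_eq_zero_of_not_prime _ hq]
          exact Nat.zero_le _
        haveI := Fact.mk hq
        -- find an A-invariant Sylow q-subgroup
        have hnrS : ¬ r ∣ Nat.card (Sylow q X) := by
          intro hdvd'
          have h1 : Nat.card (Sylow q X) ∣ Nat.card X := by
            obtain ⟨P⟩ := (inferInstance : Nonempty (Sylow q X))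
            exact (Sylow.card_dvd_index P).trans
              ⟨Nat.card ↥(P : Subgroup X), by
                rw [mul_comm]; exact (Subgroup.card_mul_index (P : Subgroup X)).symm⟩
          exact hrX (hdvd'.trans h1)
        obtain ⟨P, hP⟩ := hpA.nonempty_fixed_point_of_prime_not_dvd_card (Sylow q X) hnrS
        have hPinv : ∀ a : A, a • (P : Subgroup X) = (P : Subgroup X) := by
          intro a
          have h1 : a • P = P := MulAction.mem_fixedPoints.mp hP a
          calc a • (P : Subgroup X) = ((a • P : Sylow q X) : Subgroup X) :=
                (Sylow.pointwise_smul_def).symm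
          _ = ((P : Sylow q X) : Subgroup X) := by rw [h1]
        have hQinv : ∀ a : A, ∀ v ∈ (P : Subgroup X), φ a v ∈ (P : Subgroup X) := by
          intro a v hv
          rw [← hsmul_eq]
          rw [← hPinv a]
          exact Subgroup.smul_mem_pointwise_smul v a _ hv
        have hQne : (P : Subgroup X) ≠ ⊤ := by
          intro htop
          refine hpg q hq ?_
          intro x
          obtain ⟨m, hm⟩ := P.2 ⟨x, by rw [htop]; trivial⟩
          exact ⟨m, by simpa using congrArg Subtype.val hm⟩
        have hQcard : Nat.card ↥(P : Subgroup X) ≤ Nat.card X :=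
          Subgroup.card_le_card_group _
        have hQne' : Nat.card ↥(P : Subgroup X) ≠ Nat.card X := by
          intro h
          exact hQne (Subgroup.eq_top_of_card_eq _ h)
        have hQle : Nat.card ↥(P : Subgroup X) ≤ k := by omega
        have hgenQ := ih ↥(P : Subgroup X) (restrictAut φ _ hQinv) hQle
          (Nat.Coprime.coprime_dvd_left (Subgroup.card_subgroup_dvd_card _) hco)
        have hQK : (P : Subgroup X) ≤ K := by
          have h1 : Subgroup.map (P : Subgroup X).subtype ⊤ = (P : Subgroup X) := by
            rw [← MonoidHom.range_eq_map]
            exact Subgroup.subtype_range _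
          rw [← h1, ← hgenQ]
          simp only [Subgroup.map_iSup]
          refine iSup_le fun B => iSup_le fun hB => ?_
          refine le_trans ?_ (hle B hB)
          rintro x ⟨w, hw, rfl⟩
          intro b hb
          exact congrArg Subtype.val (hw b hb)
        have hcard_eq : Nat.card ↥(P : Subgroup X) = q ^ (Nat.card X).factorization q :=
          P.card_eq_multiplicity
        have h2 : q ^ (Nat.card X).factorization q ∣ Nat.card ↥K := by
          rw [← hcard_eq]
          exact Subgroup.card_dvd_of_le hQK
        exact (hq.pow_dvd_iff_le_factorization hKpos.ne').mp h2
      have hcard_le : Nat.card ↥K ≤ Nat.card X := Subgroup.card_le_card_group K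
      have : Nat.card ↥K = Nat.card X := Nat.le_antisymm hcard_le (Nat.le_of_dvd hKpos hdvd)
      exact Subgroup.eq_top_of_card_eq K this

end SigAux
namespace SigAux

open Pointwise

section Bridge

variable {A G : Type*} [Group A] [Group G] [MulDistribMulAction A G]

lemma mem_thetaB {θ : A → Subgroup G} {B : Subgroup A} {x : G} :
    x ∈ thetaB θ B ↔ ∀ b ∈ B, b ≠ 1 → x ∈ θ b := by
  unfold thetaB
  simp only [Subgroup.mem_iInf]
  constructor
  · intro h b hb hb1
    exact h b ⟨hb, hb1⟩
  · intro h b hb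
    exact h b hb.1 hb.2

lemma thetaB_le_theta {θ : A → Subgroup G} {B : Subgroup A} {c : A}
    (hc : c ∈ B) (hc1 : c ≠ 1) : thetaB θ B ≤ θ c :=
  fun _ hx => mem_thetaB.mp hx c hc hc1

lemma thetaB_top_le {θ : A → Subgroup G} {B : Subgroup A} :
    thetaB θ ⊤ ≤ thetaB θ B := by
  intro x hx
  rw [mem_thetaB] at hx ⊢
  exact fun b _ hb1 => hx b trivial hb1

lemma thetaB_mono {θ ψ : A → Subgroup G} (hsub : ∀ a : A, a ≠ 1 → ψ a ≤ θ a)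
    {B : Subgroup A} : thetaB ψ B ≤ thetaB θ B := by
  intro x hx
  rw [mem_thetaB] at hx ⊢
  exact fun b hb hb1 => hsub b hb1 (hx b hb hb1)

lemma subgroup_finite_of_le {H K : Subgroup G} (hle : H ≤ K) (hK : Finite ↥K) :
    Finite ↥H := by
  haveI := hK
  exact Finite.of_injective (Subgroup.inclusion hle) (Subgroup.inclusion_injective hle)

lemma mem_fixedSub {a : A} {x : G} : x ∈ fixedSub G a ↔ a • x = x := Iff.rfl

variable [Finite A]

/-- if `x` is fixed by a hyperplane `B` and by `a₀ ∉ B` then it is fixed by all of `A` -/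
lemma fixed_of_all {r : ℕ} (hr : r.Prime)
    (hcA : ∀ x y : A, x * y = y * x) (heA : ∀ a : A, a ^ r = 1)
    {B : Subgroup A} (hB : B.index = r) {a₀ : A} (ha₀ : a₀ ∉ B) {x : G}
    (hfix : ∀ b ∈ B, b • x = x) (hfa : a₀ • x = x) (c : A) : c • x = x := by
  haveI : B.Normal := ⟨fun y hy g => by simpa [hcA g y, mul_assoc] using hy⟩
  set st := MulAction.stabilizer A x with hst
  have hsB : B ≤ st := fun b hb => hfix b hb
  have hsa : a₀ ∈ st := hfa
  set π := QuotientGroup.mk' B with hπ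
  have hone : π a₀ ≠ 1 := fun h => ha₀ ((QuotientGroup.eq_one_iff a₀).mp h)
  have hcard : Nat.card (A ⧸ B) = r := by rw [← Subgroup.index_eq_card, hB]
  have horda : orderOf (π a₀) = r :=
    orderOf_eq_prime_of_exp hr (by rw [← map_pow, heA, map_one]) hone
  have hztop : Subgroup.zpowers (π a₀) = ⊤ := by
    apply Subgroup.eq_top_of_card_eq
    rw [Nat.card_zpowers, horda, hcard]
  have hgen : π c ∈ Subgroup.zpowers (π a₀) := by rw [hztop]; trivial
  obtain ⟨i, hi⟩ := hgen
  have h2 : π (a₀ ^ i) = π c := by rw [map_zpow]; exact hi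
  have h1 : c * (a₀ ^ i)⁻¹ ∈ B := by
    apply (QuotientGroup.eq_one_iff _).mp
    show π (c * (a₀ ^ i)⁻¹) = 1
    rw [map_mul, map_inv, h2]
    simp
  have h3 : c ∈ st := by
    have h4 : (c * (a₀ ^ i)⁻¹) * a₀ ^ i ∈ st :=
      mul_mem (hsB h1) (zpow_mem hsa i)
    simpa using h4
  exact h3

variable {r : ℕ} {θ : A → Subgroup G}

lemma thetaB_top_eq (hr : r.Prime)
    (hcA : ∀ x y : A, x * y = y * x) (heA : ∀ a : A, a ^ r = 1)
    (hθ : IsSignalizerFunctorOn ⊤ θ)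
    {B : Subgroup A} (hB : B.index = r) {b₀ : A} (hb₀ : b₀ ∈ B) (hb₀1 : b₀ ≠ 1)
    {a₀ : A} (ha₀ : a₀ ∉ B) :
    thetaB θ ⊤ = thetaB θ B ⊓ fixedSub G a₀ := by
  have ha₀1 : a₀ ≠ 1 := fun h => ha₀ (h ▸ one_mem B)
  apply le_antisymm
  · refine le_inf thetaB_top_le ?_
    exact le_trans (thetaB_le_theta trivial ha₀1) (hθ a₀ trivial ha₀1).2.2.1
  · intro x hx
    obtain ⟨hx1, hx2⟩ := Subgroup.mem_inf.mp hx
    rw [mem_thetaB]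
    intro c _ hc
    have hfixB : ∀ b ∈ B, b • x = x := by
      intro b hb
      by_cases hb1 : b = 1
      · rw [hb1, one_smul]
      · exact mem_fixedSub.mp ((hθ b trivial hb1).2.2.1 (mem_thetaB.mp hx1 b hb hb1))
    have hfixall := fixed_of_all hr hcA heA hB ha₀ hfixB (mem_fixedSub.mp hx2) c
    have hxb₀ : x ∈ θ b₀ := mem_thetaB.mp hx1 b₀ hb₀ hb₀1
    exact (hθ b₀ trivial hb₀1).2.2.2.2 c trivial hc
      (Subgroup.mem_inf.mpr ⟨hxb₀, mem_fixedSub.mpr hfixall⟩)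

/-- relindex as the cardinality of the twisting set. -/
lemma relindex_eq_card_T {H Kb : Subgroup G} (a₀ : A)
    (hHK : H = Kb ⊓ fixedSub G a₀) (hle : H ≤ Kb) :
    H.relIndex Kb = Nat.card ((fun x : G => (a₀ • x) * x⁻¹) '' (Kb : Set G)) := by
  set T := (fun x : G => (a₀ • x) * x⁻¹) '' (Kb : Set G) with hT
  have hresp : ∀ x y : ↥Kb, (QuotientGroup.leftRel (H.subgroupOf Kb)) x y →
      ((a₀ • (x : G)) * (x : G)⁻¹ : G) = (a₀ • (y : G)) * (y : G)⁻¹ := by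
    intro x y hxy
    rw [QuotientGroup.leftRel_apply, Subgroup.mem_subgroupOf] at hxy
    have hzfix : a₀ • ((x : G)⁻¹ * y) = (x : G)⁻¹ * y := by
      have h5 := hHK ▸ hxy
      have h6 : a₀ • ((x⁻¹ * y : ↥Kb) : G) = ((x⁻¹ * y : ↥Kb) : G) :=
        (Subgroup.mem_inf.mp h5).2
      push_cast at h6
      exact h6
    symm
    calc (a₀ • (y : G)) * (y : G)⁻¹
        = (a₀ • ((x : G) * ((x : G)⁻¹ * (y : G)))) * (y : G)⁻¹ := by
          rw [mul_inv_cancel_left]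
      _ = ((a₀ • (x : G)) * (a₀ • ((x : G)⁻¹ * (y : G)))) * (y : G)⁻¹ := by
          rw [smul_mul']
      _ = ((a₀ • (x : G)) * ((x : G)⁻¹ * (y : G))) * (y : G)⁻¹ := by rw [hzfix]
      _ = (a₀ • (x : G)) * (x : G)⁻¹ := by group
  show Nat.card (↥Kb ⧸ H.subgroupOf Kb) = Nat.card ↥T
  apply Nat.card_eq_of_bijective
    (f := fun z => Quotient.liftOn' z
      (fun x : ↥Kb => (⟨(a₀ • (x : G)) * (x : G)⁻¹, ⟨↑x, x.2, rfl⟩⟩ : T))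
      (fun x y hxy => Subtype.ext (hresp x y hxy)))
  constructor
  · intro z w
    induction z using Quotient.inductionOn' with
    | h x =>
      induction w using Quotient.inductionOn' with
      | h y =>
        intro hxy
        have h : ((a₀ • (x : G)) * (x : G)⁻¹ : G) = (a₀ • (y : G)) * (y : G)⁻¹ :=
          congrArg Subtype.val hxy
        apply Quotient.sound'
        rw [QuotientGroup.leftRel_apply, Subgroup.mem_subgroupOf]
        rw [hHK]
        refine Subgroup.mem_inf.mpr ⟨SetLike.coe_mem _, ?_⟩
        rw [mem_fixedSub]
        push_cast
        have h3 : (x : G)⁻¹ * y = (a₀ • (x : G))⁻¹ * ((a₀ • (y : G)) * (y : G)⁻¹) * y := by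
          rw [← h]; group
        rw [smul_mul', smul_inv', h3]
        group
  · rintro ⟨w, x, hx, rfl⟩
    exact ⟨Quotient.mk'' (⟨x, hx⟩ : ↥Kb), rfl⟩

lemma card_eq_relindex_mul {H K : Subgroup G} (hle : H ≤ K) [Finite ↥K] :
    Nat.card ↥K = H.relIndex K * Nat.card ↥H := by
  have h1 := Subgroup.card_eq_card_quotient_mul_card_subgroup (H.subgroupOf K)
  rw [h1]
  congr 1
  exact Nat.card_congr (Subgroup.subgroupOfEquivOfLe hle).toEquiv

end Bridge

end SigAux
namespace SigAux

open Pointwise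

lemma prod_eq_of_le_of_prod_eq {ι : Type*} {s : Finset ι} {f g : ι → ℕ}
    (hle : ∀ i ∈ s, f i ≤ g i) (hpos : ∀ i ∈ s, 0 < f i)
    (heq : ∏ i ∈ s, f i = ∏ i ∈ s, g i) : ∀ i ∈ s, f i = g i := by
  classical
  induction s using Finset.induction_on with
  | empty => intro i hi; exact absurd hi (Finset.notMem_empty i)
  | @insert a s ha ih =>
    have hfa := hpos a (Finset.mem_insert_self a s)
    have hfA : f a ≤ g a := hle a (Finset.mem_insert_self a s)
    have hles : ∀ i ∈ s, f i ≤ g i := fun i hi => hle i (Finset.mem_insert_of_mem hi)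
    have hposs : ∀ i ∈ s, 0 < f i := fun i hi => hpos i (Finset.mem_insert_of_mem hi)
    rw [Finset.prod_insert ha, Finset.prod_insert ha] at heq
    have hPle : ∏ i ∈ s, f i ≤ ∏ i ∈ s, g i := Finset.prod_le_prod' hles
    have hPpos : 0 < ∏ i ∈ s, f i := Finset.prod_pos hposs
    have hga : 0 < g a := lt_of_lt_of_le hfa hfA
    have h6 : g a * ∏ i ∈ s, f i = g a * ∏ i ∈ s, g i := by
      apply le_antisymm (Nat.mul_le_mul_left _ hPle)
      rw [← heq]
      exact Nat.mul_le_mul_right _ hfA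
    have hPeq : ∏ i ∈ s, f i = ∏ i ∈ s, g i := Nat.eq_of_mul_eq_mul_left hga h6
    have hfaeq : f a = g a := by
      have h7 : f a * ∏ i ∈ s, f i = g a * ∏ i ∈ s, f i := by
        rw [heq, hPeq]
      exact Nat.eq_of_mul_eq_mul_right hPpos h7
    intro i hi
    rcases Finset.mem_insert.mp hi with rfl | hi'
    · exact hfaeq
    · exact ih hles hposs hPeq i hi'

section Key

variable {A G : Type*} [Group A] [Finite A] [Group G] [MulDistribMulAction A G]

lemma subgroup_card_le_of_le {H K : Subgroup G} (h : H ≤ K) (hK : Finite ↥K) :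
    Nat.card ↥H ≤ Nat.card ↥K := by
  haveI := hK
  have hfin : (K : Set G).Finite := Set.toFinite _
  have h1 : Nat.card ↥H = (H : Set G).ncard := Nat.card_coe_set_eq (H : Set G)
  have h2 : Nat.card ↥K = (K : Set G).ncard := Nat.card_coe_set_eq (K : Set G)
  rw [h1, h2]
  exact Set.ncard_le_ncard h hfin

lemma keyB {r : ℕ} (hr : r.Prime)
    (hcA : ∀ x y : A, x * y = y * x) (heA : ∀ a : A, a ^ r = 1) (hnc : ¬ IsCyclic A)
    {θ ψ : A → Subgroup G}
    (hθ : IsSignalizerFunctorOn ⊤ θ) (hψ : IsSignalizerFunctorOn ⊤ ψ)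
    (hsub : ∀ a : A, a ≠ 1 → ψ a ≤ θ a)
    (B : Subgroup A) (hB : B.index = r) :
    (thetaB ψ ⊤).relIndex (thetaB ψ B) ≤ (thetaB θ ⊤).relIndex (thetaB θ B) ∧
    0 < (thetaB ψ ⊤).relIndex (thetaB ψ B) ∧
    ((thetaB ψ ⊤).relIndex (thetaB ψ B) = (thetaB θ ⊤).relIndex (thetaB θ B) →
      Nat.card ↥(thetaB ψ ⊤) = Nat.card ↥(thetaB θ ⊤) →
      thetaB ψ B = thetaB θ B) := by
  haveI := Fact.mk hr
  have hBbot : B ≠ ⊥ := by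
    intro h
    refine hnc (isCyclic_of_prime_card (p := r) ?_)
    rw [← Subgroup.index_bot (G := A), ← h, hB]
  have hBtop : B ≠ ⊤ := by
    intro h
    rw [h, Subgroup.index_top] at hB
    exact hr.one_lt.ne' hB.symm
  obtain ⟨b₀, hb₀, hb₀1⟩ : ∃ b ∈ B, b ≠ 1 := by
    by_contra hall
    push_neg at hall
    exact hBbot ((Subgroup.eq_bot_iff_forall B).mpr hall)
  obtain ⟨a₀, ha₀⟩ : ∃ a, a ∉ B := by
    by_contra hall
    push_neg at hall
    exact hBtop ((Subgroup.eq_top_iff' B).mpr hall)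
  haveI hfθ : Finite ↥(thetaB θ B) :=
    subgroup_finite_of_le (thetaB_le_theta hb₀ hb₀1) (hθ b₀ trivial hb₀1).1
  haveI hfψ : Finite ↥(thetaB ψ B) :=
    subgroup_finite_of_le (thetaB_le_theta hb₀ hb₀1) (hψ b₀ trivial hb₀1).1
  have hHKθ := thetaB_top_eq hr hcA heA hθ hB hb₀ hb₀1 ha₀
  have hHKψ := thetaB_top_eq hr hcA heA hψ hB hb₀ hb₀1 ha₀
  have hleθ : thetaB θ ⊤ ≤ thetaB θ B := thetaB_top_le
  have hleψ : thetaB ψ ⊤ ≤ thetaB ψ B := thetaB_top_le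
  have hcθ := relindex_eq_card_T a₀ hHKθ hleθ
  have hcψ := relindex_eq_card_T a₀ hHKψ hleψ
  set Tθ := (fun x : G => (a₀ • x) * x⁻¹) '' (thetaB θ B : Set G) with hTθ
  set Tψ := (fun x : G => (a₀ • x) * x⁻¹) '' (thetaB ψ B : Set G) with hTψ
  have hsubT : Tψ ⊆ Tθ := Set.image_mono (thetaB_mono hsub)
  have hfinθset : (thetaB θ B : Set G).Finite := Set.toFinite _
  have hfinψset : (thetaB ψ B : Set G).Finite := Set.toFinite _
  have hfinTθ : Tθ.Finite := hfinθset.image _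
  have hfinTψ : Tψ.Finite := hfinψset.image _
  refine ⟨?_, ?_, ?_⟩
  · rw [hcψ, hcθ, Nat.card_coe_set_eq, Nat.card_coe_set_eq]
    exact Set.ncard_le_ncard hsubT hfinTθ
  · rw [hcψ]
    haveI : Finite ↥Tψ := hfinTψ.to_subtype
    haveI : Nonempty ↥Tψ := ⟨⟨(a₀ • 1) * 1⁻¹, 1, one_mem _, rfl⟩⟩
    exact Nat.card_pos
  · intro hrel hcardtop
    have h1 : Nat.card ↥(thetaB ψ B) = Nat.card ↥(thetaB θ B) := by
      rw [card_eq_relindex_mul hleψ, card_eq_relindex_mul hleθ, hrel, hcardtop]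
    exact subgroup_eq_of_le_of_card_le (thetaB_mono hsub) (le_of_eq h1.symm)

end Key

end SigAux

/-- If `ψ` is a subfunctor of the `A`-signalizer functor `θ` (with `A` a noncyclic
elementary abelian `r`-group), then `‖ψ‖ ≤ ‖θ‖`, with equality if and only if
`ψ(a) = θ(a)` for all `a ∈ A∖{1}`. -/
theorem signNorm_le_of_subfunctor
    {A G : Type*} [Group A] [Finite A] [Group G] [MulDistribMulAction A G]
    (r : ℕ) (hr : r.Prime) (hA : IsElementaryAbelian r A) (hnc : ¬ IsCyclic A)
    (θ ψ : A → Subgroup G)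
    (hθ : IsSignalizerFunctorOn ⊤ θ) (hψ : IsSignalizerFunctorOn ⊤ ψ)
    (hsub : ∀ a : A, a ≠ 1 → ψ a ≤ θ a) :
    signNorm r ψ ≤ signNorm r θ ∧
      (signNorm r ψ = signNorm r θ ↔ ∀ a : A, a ≠ 1 → ψ a = θ a) := by
  classical
  obtain ⟨hcA, heA⟩ := hA
  haveI hnt : Nontrivial A := by
    rcases subsingleton_or_nontrivial A with h | h
    · exact absurd isCyclic_of_subsingleton hnc
    · exact h
  haveI := Fact.mk hr
  letI : Fintype (Subgroup A) := Fintype.ofFinite _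
  obtain ⟨c₁, hc₁⟩ := exists_ne (1 : A)
  haveI hfθ1 : Finite ↥(θ c₁) := (hθ c₁ trivial hc₁).1
  haveI hfψ1 : Finite ↥(ψ c₁) := (hψ c₁ trivial hc₁).1
  haveI hfinθtop : Finite ↥(thetaB θ ⊤) :=
    SigAux.subgroup_finite_of_le (SigAux.thetaB_le_theta trivial hc₁) hfθ1
  haveI hfinψtop : Finite ↥(thetaB ψ ⊤) :=
    SigAux.subgroup_finite_of_le (SigAux.thetaB_le_theta trivial hc₁) hfψ1
  set t := Finset.univ.filter (fun B : Subgroup A => B.index = r) with ht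
  have hmem_t : ∀ B : Subgroup A, B ∈ t ↔ B.index = r := fun B => by simp [ht]
  have hconv : ∀ η : A → Subgroup G, signNorm r η =
      Nat.card ↥(thetaB η ⊤) * ∏ B ∈ t, (thetaB η ⊤).relIndex (thetaB η B) := by
    intro η
    rw [signNorm]
    congr 1
    exact finprod_cond_eq_prod_of_cond_iff _ (fun {B} _ => (hmem_t B).symm)
  have key := fun (B : Subgroup A) (hB : B.index = r) =>
    SigAux.keyB hr hcA heA hnc hθ hψ hsub B hB
  have hctop_le : Nat.card ↥(thetaB ψ ⊤) ≤ Nat.card ↥(thetaB θ ⊤) :=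
    SigAux.subgroup_card_le_of_le (SigAux.thetaB_mono hsub) hfinθtop
  have hPle : ∏ B ∈ t, (thetaB ψ ⊤).relIndex (thetaB ψ B) ≤
      ∏ B ∈ t, (thetaB θ ⊤).relIndex (thetaB θ B) :=
    Finset.prod_le_prod' (fun B hB => (key B ((hmem_t B).mp hB)).1)
  have hcψpos : 0 < Nat.card ↥(thetaB ψ ⊤) := Nat.card_pos
  have hcθpos : 0 < Nat.card ↥(thetaB θ ⊤) := Nat.card_pos
  have hPψpos : 0 < ∏ B ∈ t, (thetaB ψ ⊤).relIndex (thetaB ψ B) :=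
    Finset.prod_pos (fun B hB => (key B ((hmem_t B).mp hB)).2.1)
  constructor
  · rw [hconv ψ, hconv θ]
    exact Nat.mul_le_mul hctop_le hPle
  constructor
  · -- equality implies pointwise equality
    intro heq
    rw [hconv ψ, hconv θ] at heq
    have h6 : Nat.card ↥(thetaB θ ⊤) * ∏ B ∈ t, (thetaB ψ ⊤).relIndex (thetaB ψ B)
        = Nat.card ↥(thetaB θ ⊤) * ∏ B ∈ t, (thetaB θ ⊤).relIndex (thetaB θ B) := by
      apply le_antisymm (Nat.mul_le_mul_left _ hPle)
      rw [← heq]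
      exact Nat.mul_le_mul_right _ hctop_le
    have hPeq : ∏ B ∈ t, (thetaB ψ ⊤).relIndex (thetaB ψ B)
        = ∏ B ∈ t, (thetaB θ ⊤).relIndex (thetaB θ B) :=
      Nat.eq_of_mul_eq_mul_left hcθpos h6
    have hceq : Nat.card ↥(thetaB ψ ⊤) = Nat.card ↥(thetaB θ ⊤) := by
      apply Nat.eq_of_mul_eq_mul_right hPψpos
      rw [heq, ← hPeq]
    have hterm := SigAux.prod_eq_of_le_of_prod_eq
      (fun B hB => (key B ((hmem_t B).mp hB)).1)
      (fun B hB => (key B ((hmem_t B).mp hB)).2.1) hPeq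
    have hBeq : ∀ B : Subgroup A, B.index = r → thetaB ψ B = thetaB θ B :=
      fun B hB => (key B hB).2.2 (hterm B ((hmem_t B).mpr hB)) hceq
    -- now deduce ψ c = θ c for all c ≠ 1
    intro c hc
    refine le_antisymm (hsub c hc) ?_
    set Φ := MulDistribMulAction.toMulAut A G with hΦ
    have hΦapp : ∀ (a : A) (x : G), Φ a x = a • x := fun a x => rfl
    have hinv : ∀ a : A, ∀ v ∈ θ c, Φ a v ∈ θ c := by
      intro a v hv
      have h7 := (hθ c trivial hc).2.1 a trivial
      have h8 : a • v ∈ a • θ c := Subgroup.smul_mem_pointwise_smul v a (θ c) hv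
      rw [h7] at h8
      exact h8
    have hrA : r ∣ Nat.card A := by
      have h9 : orderOf c₁ = r := SigAux.orderOf_eq_prime_of_exp hr (heA c₁) hc₁
      rw [← h9]
      exact orderOf_dvd_natCard c₁
    have hcoθ : (Nat.card ↥(θ c)).Coprime r := by
      have h8 := (hθ c trivial hc).2.2.2.1
      have h9 : Nat.card ↥(⊤ : Subgroup A) = Nat.card A :=
        Nat.card_congr Subgroup.topEquiv.toEquiv
      rw [h9] at h8
      exact Nat.Coprime.coprime_dvd_right hrA h8
    haveI hfθc : Finite ↥(θ c) := (hθ c trivial hc).1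
    have hgen := SigAux.genFull hr hcA heA hnt (Nat.card ↥(θ c)) ↥(θ c)
      (SigAux.restrictAut Φ (θ c) hinv) le_rfl hcoθ
    have h1 : Subgroup.map (θ c).subtype ⊤ = θ c := by
      rw [← MonoidHom.range_eq_map]
      exact Subgroup.subtype_range _
    rw [← h1, ← hgen]
    simp only [Subgroup.map_iSup]
    refine iSup_le fun B => iSup_le fun hB => ?_
    rintro y ⟨w, hw, rfl⟩
    have hBbot : B ≠ ⊥ := by
      intro h
      refine hnc (isCyclic_of_prime_card (p := r) ?_)
      rw [← Subgroup.index_bot (G := A), ← h, hB]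
    obtain ⟨b₀, hb₀, hb₀1⟩ : ∃ b ∈ B, b ≠ 1 := by
      by_contra hall
      push_neg at hall
      exact hBbot ((Subgroup.eq_bot_iff_forall B).mpr hall)
    have hwθB : (↑w : G) ∈ thetaB θ B := by
      rw [SigAux.mem_thetaB]
      intro b hb hb1
      refine (hθ c trivial hc).2.2.2.2 b trivial hb1 (Subgroup.mem_inf.mpr ⟨w.2, ?_⟩)
      rw [SigAux.mem_fixedSub, ← hΦapp]
      exact congrArg Subtype.val (hw b hb)
    have hwψ : (↑w : G) ∈ ψ b₀ :=
      SigAux.thetaB_le_theta hb₀ hb₀1 (by rw [hBeq B hB]; exact hwθB)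
    have hwfix : (↑w : G) ∈ fixedSub G c := (hθ c trivial hc).2.2.1 w.2
    exact (hψ b₀ trivial hb₀1).2.2.2.2 c trivial hc (Subgroup.mem_inf.mpr ⟨hwψ, hwfix⟩)
  · -- pointwise equality implies equality of norms
    intro h
    have hTB : thetaB ψ = thetaB θ := by
      funext B
      refine le_antisymm (SigAux.thetaB_mono (fun a ha => le_of_eq (h a ha)))
        (SigAux.thetaB_mono (fun a ha => le_of_eq (h a ha).symm))
    rw [signNorm, signNorm, hTB]
end

section
/- Let r be a prime, let A be a noncyclic elementary abelian r-group acting on a (possibly infinite) group G, and let θ be an A-signalizer functor on G. Suppose N is a normal subgroup of G that is also a θ-subgroup. Let Ḡ = G/N with the induced action of A, and define θ̄(a) = θ(a)N/N for each a ∈ A∖{1}. Then: (i) θ̄ is an A-signalizer functor on Ḡ; (ii) θ̄(B) = θ(B)N/N for every nontrivial subgroup B ≤ A; (iii) θ is complete if and only if θ̄ is complete; and (iv) ‖θ̄‖ ≤ ‖θ‖, with equality if and only if N = 1. -/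
open Pointwise

open Pointwise

section Helpers

variable {A G : Type*} [Group A] [Group G] [MulDistribMulAction A G]

theorem mem_fixedSub_iff {a : A} {g : G} : g ∈ fixedSub G a ↔ a • g = g := Iff.rfl

theorem fixed_of_le_stab {K : Subgroup A} {v : G} (h : K ≤ MulAction.stabilizer A v) :
    ∀ b ∈ K, b • v = v := fun b hb => h hb

theorem fixed_zpowers {z : A} {v : G} (hz : z • v = v) :
    ∀ b ∈ Subgroup.zpowers z, b • v = v :=
  fixed_of_le_stab (Subgroup.zpowers_le.mpr (show z ∈ MulAction.stabilizer A v from hz))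

theorem fixed_sup {K : Subgroup A} {z : A} {v : G} (hK : ∀ k ∈ K, k • v = v)
    (hz : z • v = v) : ∀ b ∈ K ⊔ Subgroup.zpowers z, b • v = v :=
  fixed_of_le_stab (sup_le (fun k hk => hK k hk)
    (Subgroup.zpowers_le.mpr (show z ∈ MulAction.stabilizer A v from hz)))

theorem smul_mem_of_inv {H : Subgroup G} {a : A} (hinv : a • H = H) {g : G} (hg : g ∈ H) :
    a • g ∈ H := by
  rw [← hinv]; exact Subgroup.smul_mem_pointwise_smul g a H hg

theorem finite_of_le {H K : Subgroup G} [Finite K] (h : H ≤ K) : Finite H := by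
  apply Finite.of_injective (fun x : ↥H => (⟨(x : G), h x.2⟩ : K))
  intro a b hab
  have : (a : G) = (b : G) := Subtype.mk_eq_mk.mp hab
  exact Subtype.ext this

theorem not_dvd_of_coprime {r m n k : ℕ} (hr : 1 < r) (hco : m.Coprime n) (hrn : r ∣ n)
    (hkm : k ∣ m) : ¬ r ∣ k := fun h =>
  absurd (Nat.le_of_dvd one_pos (hco ▸ Nat.dvd_gcd (h.trans hkm) hrn)) (not_le.mpr hr)

theorem relindex_mul_card {H K : Subgroup G} [Finite K] (h : H ≤ K) :
    H.relIndex K * Nat.card H = Nat.card K := by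
  have h1 := Subgroup.card_eq_card_quotient_mul_card_subgroup (H.subgroupOf K)
  have h2 : Nat.card (H.subgroupOf K) = Nat.card H :=
    Nat.card_congr (Subgroup.subgroupOfEquivOfLe h).toEquiv
  rw [h1, h2]; rfl

end Helpers

section Lift

variable {A G : Type*} [Group A] [Group G] [MulDistribMulAction A G]
variable (N : Subgroup G) [N.Normal] [MulDistribMulAction A (G ⧸ N)]

theorem map_pointwise_smul
    (hcompat : ∀ (a : A) (g : G), ((a • g : G) : G ⧸ N) = a • (g : G ⧸ N))
    (a : A) (H : Subgroup G) :
    (a • H).map (QuotientGroup.mk' N) = a • H.map (QuotientGroup.mk' N) := by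
  ext x
  rw [Subgroup.mem_pointwise_smul_iff_inv_smul_mem]
  simp only [Subgroup.mem_map, QuotientGroup.mk'_apply]
  constructor
  · rintro ⟨g, hg, rfl⟩
    rw [Subgroup.mem_pointwise_smul_iff_inv_smul_mem] at hg
    exact ⟨a⁻¹ • g, hg, by rw [hcompat]⟩
  · rintro ⟨g, hg, hgx⟩
    refine ⟨a • g, ?_, by rw [hcompat, hgx, smul_inv_smul]⟩
    rw [Subgroup.mem_pointwise_smul_iff_inv_smul_mem, inv_smul_smul]
    exact hg

theorem lift_fixed {r : ℕ} (hr : r.Prime) (hA : ∀ a : A, a ^ r = 1)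
    (hcompat : ∀ (a : A) (g : G), ((a • g : G) : G ⧸ N) = a • (g : G ⧸ N))
    (B : Subgroup A) (H : Subgroup G) [Finite H]
    (hinv : ∀ b ∈ B, b • H = H)
    (hcop : ¬ r ∣ Nat.card ↥(H ⊓ N))
    {x : G ⧸ N} (hx : x ∈ H.map (QuotientGroup.mk' N))
    (hfix : ∀ b ∈ B, b • x = x) :
    ∃ g : G, g ∈ H ∧ (∀ b ∈ B, b • g = g) ∧ (g : G ⧸ N) = x := by
  classical
  obtain ⟨g₀, hg₀H, hg₀⟩ := hx
  rw [QuotientGroup.mk'_apply] at hg₀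
  haveI : Fact r.Prime := ⟨hr⟩
  let T := {y : ↥H // ((y : G) : G ⧸ N) = x}
  haveI : Finite T := Subtype.finite
  have hmemH : ∀ b ∈ B, ∀ y ∈ H, b • y ∈ H := fun b hb y hy => smul_mem_of_inv (hinv b hb) hy
  letI : MulAction ↥B T :=
    { smul := fun b y => ⟨⟨(b : A) • (y : G), hmemH b b.2 _ (y.1).2⟩, by
        rw [hcompat, y.2]; exact hfix b b.2⟩
      one_smul := fun y => Subtype.ext (Subtype.ext (by
        show ((1 : ↥B) : A) • (y : G) = (y : G); simp))
      mul_smul := fun b c y => Subtype.ext (Subtype.ext (by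
        show ((b * c : ↥B) : A) • (y : G) = (b : A) • ((c : A) • (y : G))
        rw [Subgroup.coe_mul, mul_smul])) }
  have hBp : IsPGroup r ↥B := fun b => ⟨1, by
    rw [pow_one]; exact Subtype.ext (by rw [Subgroup.coe_pow]; exact hA (b : A))⟩
  have hN1 : ∀ g : G, (g : G ⧸ N) = 1 ↔ g ∈ N := fun g => QuotientGroup.eq_one_iff g
  have he : Nat.card T = Nat.card ↥(H ⊓ N) := Nat.card_congr
    { toFun := fun y => ⟨g₀⁻¹ * (y : G), Subgroup.mem_inf.mpr
        ⟨mul_mem (inv_mem hg₀H) (y.1).2, (hN1 _).mp (by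
          rw [QuotientGroup.mk_mul, QuotientGroup.mk_inv, y.2, hg₀, inv_mul_cancel])⟩⟩
      invFun := fun n => ⟨⟨g₀ * (n : G), mul_mem hg₀H (Subgroup.mem_inf.mp n.2).1⟩, by
        show ((g₀ * (n : G) : G) : G ⧸ N) = x
        rw [QuotientGroup.mk_mul, (hN1 _).mpr (Subgroup.mem_inf.mp n.2).2, mul_one, hg₀]⟩
      left_inv := fun y => Subtype.ext (Subtype.ext (by simp))
      right_inv := fun n => Subtype.ext (by simp) }
  have hcopT : ¬ r ∣ Nat.card T := he ▸ hcop
  obtain ⟨t, ht⟩ := hBp.nonempty_fixed_point_of_prime_not_dvd_card T hcopT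
  refine ⟨(t : G), (t.1).2, fun b hb => ?_, t.2⟩
  have := ht ⟨b, hb⟩
  exact congrArg Subtype.val (congrArg Subtype.val this)

end Lift

section ElemAbelian

variable {A : Type*} [Group A] [Finite A]

theorem bez_pow_mem {r : ℕ} (hr : r.Prime) (H : Subgroup A) (w : A) (hw : w ^ r = 1)
    {i : ℕ} (h1 : 0 < i) (h2 : i < r) (hmem : w ^ i ∈ H) : w ∈ H := by
  have hco : Nat.Coprime i r := Nat.coprime_comm.mp
    ((Nat.Prime.coprime_iff_not_dvd hr).mpr (Nat.not_dvd_of_pos_of_lt h1 h2))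
  have hico : IsCoprime (i : ℤ) (r : ℤ) := by
    rw [Int.isCoprime_iff_gcd_eq_one]
    simpa [Int.gcd] using hco
  obtain ⟨u, c, huc⟩ := hico
  have hkey : w = (w ^ (i:ℤ)) ^ u * (w ^ (r:ℤ)) ^ c := by
    rw [← zpow_mul, ← zpow_mul, ← zpow_add]
    rw [show (i:ℤ) * u + (r:ℤ) * c = 1 by rw [mul_comm (i:ℤ) u, mul_comm (r:ℤ) c]; exact huc]
    rw [zpow_one]
  rw [hkey]
  have hwr : (w ^ (r:ℤ)) = 1 := by rw [zpow_natCast, hw]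
  have hwi : w ^ (i:ℤ) ∈ H := by rw [zpow_natCast]; exact hmem
  rw [hwr, one_zpow]
  exact mul_mem (Subgroup.zpow_mem H hwi u) H.one_mem

theorem orderOf_eq_prime_of_pow {r : ℕ} (hr : r.Prime) {x : A} (hx : x ^ r = 1)
    (hx1 : x ≠ 1) : orderOf x = r :=
  (hr.eq_one_or_self_of_dvd _ (orderOf_dvd_of_pow_eq_one hx)).resolve_left
    (fun h => hx1 (orderOf_eq_one_iff.mp h))

theorem r_dvd_card {r : ℕ} (hr : r.Prime) (hA : ∀ a : A, a ^ r = 1) [Nontrivial A] :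
    r ∣ Nat.card A := by
  obtain ⟨x, hx⟩ := exists_ne (1 : A)
  exact orderOf_eq_prime_of_pow hr (hA x) hx ▸ orderOf_dvd_natCard x

theorem card_adjoin (hcomm : ∀ x y : A, x * y = y * x)
    {r : ℕ} (hr : r.Prime) (hA : ∀ a : A, a ^ r = 1)
    (K : Subgroup A) {x : A} (hx : x ∉ K) :
    Nat.card ↥(K ⊔ Subgroup.zpowers x) = Nat.card K * r := by
  have hx1 : x ≠ 1 := fun h => hx (h ▸ K.one_mem)
  have hord : orderOf x = r := orderOf_eq_prime_of_pow hr (hA x) hx1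
  haveI : K.Normal := ⟨fun n hn g => by
    rw [hcomm g n, mul_assoc, mul_inv_cancel, mul_one]; exact hn⟩
  have key : ∀ k : ℤ, x ^ k ∈ K → x ^ k = 1 := by
    intro k hk
    have hd : Int.gcd k (r:ℤ) ∣ r := by
      simpa [Int.gcd] using Nat.gcd_dvd_right k.natAbs r
    rcases hr.eq_one_or_self_of_dvd _ hd with h | h
    · exfalso; apply hx
      obtain ⟨u, c, huc⟩ := Int.isCoprime_iff_gcd_eq_one.mpr h
      have hkey : x = (x ^ k) ^ u * (x ^ (r:ℤ)) ^ c := by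
        rw [← zpow_mul, ← zpow_mul, ← zpow_add]
        rw [show k * u + (r:ℤ) * c = 1 by rw [mul_comm k u, mul_comm (r:ℤ) c]; exact huc]
        rw [zpow_one]
      rw [hkey]
      have hxr : (x ^ (r:ℤ)) = 1 := by rw [zpow_natCast, hA x]
      rw [hxr, one_zpow]
      exact mul_mem (Subgroup.zpow_mem K hk u) K.one_mem
    · have hdv : (r : ℤ) ∣ k := by
        have h2 := Int.gcd_dvd_left (a := k) (b := (r:ℤ))
        rwa [h] at h2
      exact orderOf_dvd_iff_zpow_eq_one.mp (by rw [hord]; exact hdv)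
  set L := K ⊔ Subgroup.zpowers x with hL
  have hmemf : ∀ (k : ↥K) (i : Fin r), (k : A) * x ^ (i : ℕ) ∈ L := fun k i =>
    mul_mem (Subgroup.mem_sup_left k.2)
      (Subgroup.mem_sup_right (by rw [← zpow_natCast]; exact Subgroup.zpow_mem_zpowers x (i : ℕ)))
  let f : ↥K × Fin r → ↥L := fun p => ⟨(p.1 : A) * x ^ ((p.2 : Fin r) : ℕ), hmemf p.1 p.2⟩
  have hinj : Function.Injective f := by
    rintro ⟨k1, i1⟩ ⟨k2, i2⟩ hf
    have h0 : (k1 : A) * x ^ (i1 : ℕ) = (k2 : A) * x ^ (i2 : ℕ) := Subtype.mk_eq_mk.mp hf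
    have h4 : (k1:A)⁻¹ * ((k2:A) * x ^ (i2:ℕ)) * (x ^ (i2:ℕ))⁻¹ = (k1:A)⁻¹ * (k2:A) := by
      group
    rw [← h0, inv_mul_cancel_left] at h4
    have hz : x ^ (((i1:ℕ):ℤ) - ((i2:ℕ):ℤ)) = (k1 : A)⁻¹ * (k2 : A) := by
      rw [zpow_sub, zpow_natCast, zpow_natCast]; exact h4
    have hzK : x ^ (((i1:ℕ):ℤ) - ((i2:ℕ):ℤ)) ∈ K := by
      rw [hz]; exact mul_mem (inv_mem k1.2) k2.2
    have h1 := key _ hzK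
    have hdvd : ((r:ℕ):ℤ) ∣ (((i1:ℕ):ℤ) - ((i2:ℕ):ℤ)) := by
      have h5 := orderOf_dvd_iff_zpow_eq_one.mpr h1
      rwa [hord] at h5
    have hii : ((i1:ℕ):ℤ) - ((i2:ℕ):ℤ) = 0 := by
      refine Int.eq_zero_of_abs_lt_dvd hdvd ?_
      rw [abs_lt]
      have b1 := i1.isLt; have b2 := i2.isLt
      constructor <;> [skip; skip] <;> omega
    have hi : i1 = i2 := Fin.ext (by omega)
    subst hi
    have hk12 : (k1 : A) = k2 := mul_right_cancel h0
    exact Prod.ext (Subtype.ext hk12) rfl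
  have hsurj : Function.Surjective f := by
    rintro ⟨w, hw⟩
    have hw' : w ∈ (K : Set A) * (Subgroup.zpowers x : Set A) := by
      rw [← Subgroup.normal_mul]; exact hw
    obtain ⟨k, hk, z, hz, rfl⟩ := hw'
    obtain ⟨m, rfl⟩ := Subgroup.mem_zpowers_iff.mp hz
    have hrz : ((r:ℕ):ℤ) ≠ 0 := by exact_mod_cast hr.ne_zero
    have hm0 : 0 ≤ m % (r:ℤ) := Int.emod_nonneg m hrz
    have hmr : m % (r:ℤ) < (r:ℤ) := Int.emod_lt_of_pos m (by exact_mod_cast hr.pos)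
    refine ⟨⟨⟨k, hk⟩, ⟨(m % (r:ℤ)).toNat, by omega⟩⟩, ?_⟩
    apply Subtype.ext
    show k * x ^ ((m % (r:ℤ)).toNat) = k * x ^ m
    congr 1
    rw [← zpow_natCast, Int.toNat_of_nonneg hm0]
    rw [show ((r:ℕ):ℤ) = ((orderOf x : ℕ) : ℤ) by rw [hord]]
    exact zpow_mod_orderOf x m
  have hcard := Nat.card_congr (Equiv.ofBijective f ⟨hinj, hsurj⟩)
  rw [Nat.card_prod] at hcard
  simpa using hcard.symm

theorem index_adjoin (hcomm : ∀ x y : A, x * y = y * x)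
    {r : ℕ} (hr : r.Prime) (hA : ∀ a : A, a ^ r = 1)
    (K : Subgroup A) {x : A} (hx : x ∉ K) :
    K.index = (K ⊔ Subgroup.zpowers x).index * r := by
  have h1 : K ≤ K ⊔ Subgroup.zpowers x := le_sup_left
  have h2 := Subgroup.relIndex_mul_index h1
  have h3 := relindex_mul_card h1
  rw [card_adjoin hcomm hr hA K hx] at h3
  have hK0 : 0 < Nat.card K := Nat.card_pos
  have hrel : K.relIndex (K ⊔ Subgroup.zpowers x) = r := by
    refine Nat.eq_of_mul_eq_mul_right hK0 ?_
    rw [h3, mul_comm r _]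
  rw [← h2, hrel, mul_comm]

theorem abel_key (hcomm : ∀ x y : A, x * y = y * x)
    {r : ℕ} (hr : r.Prime) (hA : ∀ a : A, a ^ r = 1)
    {V : Type*} [CommGroup V] [Finite V] [MulDistribMulAction A V]
    (hcop : (Nat.card V).Coprime (Nat.card A))
    (hhyp : ∀ B : Subgroup A, B.index = r → ∀ v : V, (∀ b ∈ B, b • v = v) → v = 1) :
    ∀ (K : Subgroup A), K ≠ ⊤ → ∀ v : V, (∀ k ∈ K, k • v = v) → v = 1 := by
  have main : ∀ n (K : Subgroup A), K.index = n → K ≠ ⊤ →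
      ∀ v : V, (∀ k ∈ K, k • v = v) → v = 1 := by
    intro n
    induction n using Nat.strong_induction_on with
    | _ n ih =>
    intro K hKn hKtop v hv
    by_cases hbase : K.index = r
    · exact hhyp K hbase v hv
    have hprop : ∀ z ∉ K, (K ⊔ Subgroup.zpowers z) ≠ ⊤ ∧ (K ⊔ Subgroup.zpowers z).index < n := by
      intro z hz
      have hidx := index_adjoin hcomm hr hA K hz
      have hL0 : (K ⊔ Subgroup.zpowers z).index ≠ 0 := Subgroup.index_ne_zero_of_finite
      constructor
      · intro htop
        rw [htop, Subgroup.index_top, one_mul] at hidx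
        exact hbase hidx
      · rw [← hKn, hidx]
        have h1r : 1 < r := hr.one_lt
        have := Nat.pos_of_ne_zero hL0
        calc (K ⊔ Subgroup.zpowers z).index
            < (K ⊔ Subgroup.zpowers z).index * r := by
              exact lt_mul_iff_one_lt_right this |>.mpr h1r
        _ = _ := rfl
    have nrm_fixed : ∀ z ∉ K, ∀ b ∈ K ⊔ Subgroup.zpowers z,
        b • (∏ i ∈ Finset.range r, z ^ i • v) = ∏ i ∈ Finset.range r, z ^ i • v := by
      intro z hz
      refine fixed_sup ?_ ?_
      · intro k hk
        rw [Finset.smul_prod']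
        refine Finset.prod_congr rfl fun i _ => ?_
        rw [← mul_smul, hcomm k (z ^ i), mul_smul, hv k hk]
      · have e1 := Finset.prod_range_succ' (fun i => z ^ i • v) r
        have e2 := Finset.prod_range_succ (fun i => z ^ i • v) r
        have hfr : z ^ r • v = z ^ 0 • v := by rw [hA z, pow_zero]
        have e3 : (∏ i ∈ Finset.range r, z ^ (i+1) • v) * (z ^ 0 • v)
             = (∏ i ∈ Finset.range r, z ^ i • v) * (z ^ 0 • v) := by
          rw [← e1, e2, hfr]
        have hmain := mul_right_cancel e3
        rw [Finset.smul_prod']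
        have h₁ : ∀ i ∈ Finset.range r, z • (z ^ i • v) = z ^ (i+1) • v := fun i _ => by
          rw [← mul_smul, ← pow_succ']
        rw [Finset.prod_congr rfl h₁]
        exact hmain
    have key : ∀ z ∉ K, (∏ i ∈ Finset.range r, z ^ i • v) = 1 := by
      intro z hz
      obtain ⟨hne, hlt⟩ := hprop z hz
      exact ih _ hlt _ rfl hne _ (nrm_fixed z hz)
    obtain ⟨x, hx⟩ : ∃ x, x ∉ K := by
      by_contra h; push_neg at h
      exact hKtop ((Subgroup.eq_top_iff' K).mpr fun a => h a)
    have hLne : (K ⊔ Subgroup.zpowers x) ≠ ⊤ := (hprop x hx).1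
    obtain ⟨y, hy⟩ : ∃ y, y ∉ K ⊔ Subgroup.zpowers x := by
      by_contra h; push_neg at h
      exact hLne ((Subgroup.eq_top_iff' _).mpr fun a => h a)
    have hyK : y ∉ K := fun h => hy (Subgroup.mem_sup_left h)
    have hxyi : ∀ i < r, x * y ^ i ∉ K := by
      intro i hi hmem
      rcases Nat.eq_zero_or_pos i with h0 | hpos
      · subst h0; rw [pow_zero, mul_one] at hmem; exact hx hmem
      · have hxL : x ∈ K ⊔ Subgroup.zpowers x := Subgroup.mem_sup_right (Subgroup.mem_zpowers x)
        have hyiL : y ^ i ∈ K ⊔ Subgroup.zpowers x := by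
          have h5 := mul_mem (inv_mem hxL)
            (Subgroup.mem_sup_left hmem : x * y ^ i ∈ K ⊔ Subgroup.zpowers x)
          rwa [inv_mul_cancel_left] at h5
        exact hy (bez_pow_mem hr _ y (hA y) hpos hi hyiL)
    have hyj : ∀ j, 0 < j → j < r → y ^ j ∉ K := fun j h1 h2 hmem =>
      hyK (bez_pow_mem hr K y (hA y) h1 h2 hmem)
    have hvr : v ^ r = 1 := by
      have e0 : ∏ i ∈ Finset.range r, ∏ j ∈ Finset.range r, ((x * y ^ i) ^ j) • v = 1 :=
        Finset.prod_eq_one fun i hi => key _ (hxyi i (Finset.mem_range.mp hi))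
      rw [Finset.prod_comm] at e0
      have e2 : ∀ j ∈ Finset.range r, ∏ i ∈ Finset.range r, ((x * y ^ i) ^ j) • v
          = x ^ j • ∏ i ∈ Finset.range r, (y ^ j) ^ i • v := by
        intro j _
        rw [Finset.smul_prod']
        refine Finset.prod_congr rfl fun i _ => ?_
        have hc : Commute x (y ^ i) := hcomm x (y ^ i)
        rw [hc.mul_pow, pow_right_comm y i j, mul_smul]
      rw [Finset.prod_congr rfl e2] at e0
      have e3 : ∀ j ∈ Finset.range r, j ≠ 0 →
          x ^ j • ∏ i ∈ Finset.range r, (y ^ j) ^ i • v = 1 := by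
        intro j hj hj0
        rw [key (y ^ j) (hyj j (Nat.pos_of_ne_zero hj0) (Finset.mem_range.mp hj)), smul_one]
      rw [Finset.prod_eq_single 0 e3
        (fun h => absurd (Finset.mem_range.mpr hr.pos) h)] at e0
      simpa [Finset.prod_const, Finset.card_range] using e0
    have hord : orderOf v ∣ r := orderOf_dvd_of_pow_eq_one hvr
    rcases hr.eq_one_or_self_of_dvd _ hord with h1 | h2
    · exact orderOf_eq_one_iff.mp h1
    · exfalso
      haveI : Nontrivial A := ⟨⟨x, 1, fun h => hx (h ▸ K.one_mem)⟩⟩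
      have hdvdA : r ∣ Nat.card A := r_dvd_card hr hA
      have hdvdV : r ∣ Nat.card V := h2 ▸ orderOf_dvd_natCard v
      exact not_dvd_of_coprime hr.one_lt hcop hdvdA dvd_rfl hdvdV
  exact fun K hK v hv => main K.index K rfl hK v hv

end ElemAbelian

section SubAction

variable {A G : Type*} [Group A] [Group G] [MulDistribMulAction A G]

/-- The action of `A` restricted to an invariant subgroup. -/
def subMulDistrib (H : Subgroup G) (hinv : ∀ a : A, a • H = H) :
    MulDistribMulAction A ↥H where
  smul a x := ⟨a • (x : G), smul_mem_of_inv (hinv a) x.2⟩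
  one_smul x := Subtype.ext (one_smul A (x : G))
  mul_smul a b x := Subtype.ext (mul_smul a b (x : G))
  smul_mul a x y := Subtype.ext (smul_mul' a (x : G) (y : G))
  smul_one a := Subtype.ext (smul_one a)

theorem smul_centralizer (a : A) (S : Set G) :
    a • Subgroup.centralizer S = Subgroup.centralizer (a • S) := by
  ext z
  rw [Subgroup.mem_pointwise_smul_iff_inv_smul_mem, Subgroup.mem_centralizer_iff,
    Subgroup.mem_centralizer_iff]
  constructor
  · intro h t ht
    obtain ⟨s, hs, rfl⟩ := Set.mem_smul_set.mp ht
    have h1 := h s hs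
    have h2 : a • (s * (a⁻¹ • z)) = a • ((a⁻¹ • z) * s) := congrArg (a • ·) h1
    rw [smul_mul', smul_mul', smul_inv_smul] at h2
    exact h2
  · intro h s hs
    have h1 := h (a • s) (Set.smul_mem_smul_set hs)
    have h2 : a⁻¹ • ((a • s) * z) = a⁻¹ • (z * (a • s)) := congrArg (a⁻¹ • ·) h1
    rw [smul_mul', smul_mul', inv_smul_smul] at h2
    exact h2

theorem key_trivial [Finite A]
    (hcomm : ∀ x y : A, x * y = y * x)
    {r : ℕ} (hr : r.Prime) (hA : ∀ a : A, a ^ r = 1) [Nontrivial A]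
    (N : Subgroup G) [Finite ↥N] (hNinv : ∀ a : A, a • N = N)
    (hcop : (Nat.card ↥N).Coprime (Nat.card A))
    (hfix : ∀ B : Subgroup A, B.index = r → ∀ g ∈ N, (∀ b ∈ B, b • g = g) → g = 1) :
    N = ⊥ := by
  by_contra hN
  have hc1 : Nat.card ↥N ≠ 1 := fun h => hN (Subgroup.card_eq_one.mp h)
  obtain ⟨q, hq, hqdvd⟩ := Nat.exists_prime_and_dvd hc1
  haveI hFq : Fact q.Prime := ⟨hq⟩
  haveI hFr : Fact r.Prime := ⟨hr⟩
  letI actN : MulDistribMulAction A ↥N := subMulDistrib N hNinv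
  haveI : Finite (Sylow q ↥N) :=
    Finite.of_injective (fun P : Sylow q ↥N => (P : Subgroup ↥N))
      (fun P Q h => Sylow.ext h)
  have hrA : r ∣ Nat.card A := r_dvd_card hr hA
  have hndvd : ¬ r ∣ Nat.card (Sylow q ↥N) := by
    intro hdvd
    have P₀ : Sylow q ↥N := Sylow.nonempty.some
    have h1 : Nat.card (Sylow q ↥N) ∣ Nat.card ↥N :=
      (Sylow.card_dvd_index P₀).trans (Subgroup.index_dvd_card _)
    exact not_dvd_of_coprime hr.one_lt hcop hrA h1 hdvd
  have hPG : IsPGroup r A := fun a => ⟨1, by rw [pow_one]; exact hA a⟩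
  obtain ⟨P, hPfix⟩ := hPG.nonempty_fixed_point_of_prime_not_dvd_card (Sylow q ↥N) hndvd
  have hP : ∀ a : A, a • P = P := MulAction.mem_fixedPoints.mp hPfix
  have hPinv : ∀ a : A, a • (P : Subgroup ↥N) = (P : Subgroup ↥N) := fun a => by
    rw [← Sylow.pointwise_smul_def, hP a]
  set Q : Subgroup G := Subgroup.map N.subtype (P : Subgroup ↥N) with hQdef
  have hQle : Q ≤ N := Subgroup.map_subtype_le _
  haveI hQfin : Finite ↥Q := finite_of_le hQle
  have hcardQ : Nat.card ↥Q = Nat.card ↥(P : Subgroup ↥N) :=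
    (Nat.card_congr (Subgroup.equivMapOfInjective _ N.subtype N.subtype_injective).toEquiv).symm
  have hQp : IsPGroup q ↥Q := P.2.map N.subtype
  haveI hQnt : Nontrivial ↥Q := by
    rw [← Finite.one_lt_card_iff_nontrivial, hcardQ, Sylow.card_eq_multiplicity]
    have hpos := hq.factorization_pos_of_dvd (Nat.card_pos (α := ↥N)).ne' hqdvd
    calc 1 < q := hq.one_lt
    _ ≤ q ^ (Nat.card ↥N).factorization q := Nat.le_self_pow hpos.ne' q
  have hQinv : ∀ a : A, a • Q = Q := by
    intro a
    ext z
    rw [Subgroup.mem_pointwise_smul_iff_inv_smul_mem]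
    constructor
    · rintro ⟨p, hp, hpz⟩
      refine ⟨a • p, by rw [← hPinv a]; exact Subgroup.smul_mem_pointwise_smul p a _ hp, ?_⟩
      show ((a • p : ↥N) : G) = z
      have h2 : ((a • p : ↥N) : G) = a • (p : G) := rfl
      rw [h2, show (p : G) = a⁻¹ • z from hpz, smul_inv_smul]
    · rintro ⟨p, hp, hpz⟩
      refine ⟨a⁻¹ • p, by rw [← hPinv a⁻¹]; exact Subgroup.smul_mem_pointwise_smul p a⁻¹ _ hp, ?_⟩
      show ((a⁻¹ • p : ↥N) : G) = a⁻¹ • z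
      have h2 : ((a⁻¹ • p : ↥N) : G) = a⁻¹ • (p : G) := rfl
      rw [h2, show (p : G) = z from hpz]
  set Z : Subgroup G := Q ⊓ Subgroup.centralizer (Q : Set G) with hZdef
  have hZle : Z ≤ N := inf_le_left.trans hQle
  have hZinv : ∀ a : A, a • Z = Z := by
    intro a
    rw [hZdef, Subgroup.smul_inf, smul_centralizer, ← Subgroup.coe_pointwise_smul,
      hQinv a]
  haveI hZc := hQp.center_nontrivial
  obtain ⟨z, hzc, hz1⟩ :=
    (Subgroup.nontrivial_iff_exists_ne_one (Subgroup.center ↥Q)).mp hZc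
  have hzZ : (z : G) ∈ Z := by
    have hmem : (z : G) ∈ Q ⊓ Subgroup.centralizer (Q : Set G) := by
      refine Subgroup.mem_inf.mpr ⟨z.2, Subgroup.mem_centralizer_iff.mpr ?_⟩
      rintro h hh
      exact congrArg Subtype.val (Subgroup.mem_center_iff.mp hzc ⟨h, hh⟩)
    rwa [← hZdef] at hmem
  have hz1' : (z : G) ≠ 1 := fun h => hz1 (Subtype.ext h)
  letI instZ : CommGroup ↥Z :=
    { (inferInstance : Group ↥Z) with
      mul_comm := fun u w => Subtype.ext
        (Subgroup.mem_centralizer_iff.mp (Subgroup.mem_inf.mp u.2).2 (w : G)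
          (Subgroup.mem_inf.mp w.2).1).symm }
  letI actZ : MulDistribMulAction A ↥Z := subMulDistrib Z hZinv
  have hZcop : (Nat.card ↥Z).Coprime (Nat.card A) :=
    Nat.Coprime.coprime_dvd_left (Subgroup.card_dvd_of_le hZle) hcop
  haveI : Finite ↥Z := finite_of_le hZle
  have hhypZ : ∀ B : Subgroup A, B.index = r → ∀ v : ↥Z, (∀ b ∈ B, b • v = v) → v = 1 := by
    intro B hB v hvfix
    refine Subtype.ext (hfix B hB (v : G) (hZle v.2) ?_)
    intro b hb
    have h2 : ((b • v : ↥Z) : G) = b • (v : G) := rfl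
    rw [← h2, hvfix b hb]
  have hbot : (⊥ : Subgroup A) ≠ ⊤ := by
    intro h
    obtain ⟨a, ha⟩ := exists_ne (1 : A)
    have h3 : a ∈ (⊥ : Subgroup A) := h ▸ Subgroup.mem_top a
    exact ha (Subgroup.mem_bot.mp h3)
  have hzv : (⟨(z : G), hzZ⟩ : ↥Z) = 1 :=
    abel_key hcomm hr hA hZcop hhypZ ⊥ hbot _
      (fun k hk => by rw [Subgroup.mem_bot.mp hk, one_smul])
  exact hz1' (congrArg Subtype.val hzv)

end SubAction

section QuotientCards

variable {G : Type*} [Group G]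

theorem ker_comp_subtype (N : Subgroup G) [N.Normal] (H : Subgroup G) :
    ((QuotientGroup.mk' N).comp H.subtype).ker = N.subgroupOf H := by
  ext x
  rw [MonoidHom.mem_ker, MonoidHom.comp_apply, Subgroup.mem_subgroupOf]
  rw [Subgroup.coe_subtype, QuotientGroup.mk'_apply]
  exact QuotientGroup.eq_one_iff _

theorem card_map_mul (N : Subgroup G) [N.Normal] (H : Subgroup G) [Finite H] :
    Nat.card (H.map (QuotientGroup.mk' N)) * Nat.card ↥(H ⊓ N) = Nat.card H := by
  set f := (QuotientGroup.mk' N).comp H.subtype with hf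
  have hker : f.ker = N.subgroupOf H := ker_comp_subtype N H
  have hrange : f.range = H.map (QuotientGroup.mk' N) := by
    rw [hf, MonoidHom.range_comp, Subgroup.range_subtype]
  have h1 := Subgroup.card_eq_card_quotient_mul_card_subgroup f.ker
  have h2 : Nat.card (↥H ⧸ f.ker) = Nat.card (H.map (QuotientGroup.mk' N)) := by
    rw [← hrange]
    exact Nat.card_congr (QuotientGroup.quotientKerEquivRange f).toEquiv
  have h3 : Nat.card f.ker = Nat.card ↥(H ⊓ N) := by
    rw [hker]
    calc Nat.card (N.subgroupOf H) = Nat.card ((N ⊓ H).subgroupOf H) := by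
          rw [Subgroup.inf_subgroupOf_right]
    _ = Nat.card ↥(N ⊓ H) :=
          Nat.card_congr (Subgroup.subgroupOfEquivOfLe inf_le_right).toEquiv
    _ = Nat.card ↥(H ⊓ N) := by rw [inf_comm]
  rw [← h2, ← h3]
  exact h1.symm

theorem comap_mk_facts (N : Subgroup G) [N.Normal] [Finite N]
    (Kbar : Subgroup (G ⧸ N)) [Finite Kbar] :
    Finite ↥(Kbar.comap (QuotientGroup.mk' N)) ∧
    Nat.card ↥(Kbar.comap (QuotientGroup.mk' N)) = Nat.card Kbar * Nat.card N := by
  set L := Kbar.comap (QuotientGroup.mk' N) with hL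
  set f := (QuotientGroup.mk' N).comp L.subtype with hf
  have hker : f.ker = N.subgroupOf L := ker_comp_subtype N L
  have hNL : N ≤ L := by
    intro n hn
    have h1 : ((n : G) : G ⧸ N) = 1 := (QuotientGroup.eq_one_iff n).mpr hn
    exact Subgroup.mem_comap.mpr (by rw [QuotientGroup.mk'_apply, h1]; exact Kbar.one_mem)
  have hrange : f.range = Kbar := by
    rw [hf, MonoidHom.range_comp, Subgroup.range_subtype]
    exact Subgroup.map_comap_eq_self_of_surjective (QuotientGroup.mk'_surjective N) Kbar
  haveI hkerfin : Finite f.ker := by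
    rw [hker]
    exact Finite.of_equiv _ (Subgroup.subgroupOfEquivOfLe hNL).symm.toEquiv
  haveI hrangefin : Finite f.range := hrange ▸ (inferInstance : Finite Kbar)
  haveI hqfin : Finite (↥L ⧸ f.ker) :=
    Finite.of_equiv _ (QuotientGroup.quotientKerEquivRange f).symm.toEquiv
  haveI hLfin : Finite ↥L :=
    Finite.of_equiv _ (Subgroup.groupEquivQuotientProdSubgroup (s := f.ker)).symm
  refine ⟨hLfin, ?_⟩
  rw [Subgroup.card_eq_card_quotient_mul_card_subgroup f.ker]
  congr 1
  · rw [← hrange]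
    exact Nat.card_congr (QuotientGroup.quotientKerEquivRange f).toEquiv
  · rw [hker]
    exact Nat.card_congr (Subgroup.subgroupOfEquivOfLe hNL).toEquiv

end QuotientCards

section ThetaB

variable {A G : Type*} [Group A] [Group G] [MulDistribMulAction A G]

theorem mem_thetaB {θ : A → Subgroup G} {B : Subgroup A} {x : G} :
    x ∈ thetaB θ B ↔ ∀ b : A, b ∈ B → b ≠ 1 → x ∈ θ b := by
  unfold thetaB
  simp only [Subgroup.mem_iInf, and_imp]

theorem thetaB_anti (θ : A → Subgroup G) (B : Subgroup A) : thetaB θ ⊤ ≤ thetaB θ B :=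
  fun x hx => mem_thetaB.mpr fun b _ h1 => mem_thetaB.mp hx b (Subgroup.mem_top b) h1

theorem signNorm_eq [Fintype (Subgroup A)] (r : ℕ) (θ : A → Subgroup G)
    [DecidablePred (fun B : Subgroup A => B.index = r)] :
    signNorm r θ = Nat.card (thetaB θ ⊤) *
      ∏ B ∈ Finset.univ.filter (fun B : Subgroup A => B.index = r),
        (thetaB θ ⊤).relIndex (thetaB θ B) := by
  unfold signNorm
  congr 1
  rw [finprod_eq_prod_of_fintype, Finset.prod_filter]
  exact Finset.prod_congr rfl fun B _ => finprod_eq_if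

end ThetaB

/-- Let `A` be a noncyclic elementary abelian `r`-group acting on a (possibly
infinite) group `G`, `θ` an `A`-signalizer functor on `G`, and `N` a normal
`θ`-subgroup of `G`.  Give `Ḡ = G/N` the induced `A`-action and set
`θ̄(a) = θ(a)N/N`.  Then: (i) `θ̄` is an `A`-signalizer functor on `Ḡ`;
(ii) `θ̄(B) = θ(B)N/N` for every nontrivial `B ≤ A`; (iii) `θ` is complete iff
`θ̄` is complete; (iv) `‖θ̄‖ ≤ ‖θ‖`, with equality iff `N = 1`. -/
theorem quotient_signalizer_functor
    {A G : Type*} [Group A] [Finite A] [Group G] [MulDistribMulAction A G]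
    (r : ℕ) (hr : r.Prime) (hA : IsElementaryAbelian r A) (hnc : ¬ IsCyclic A)
    (θ : A → Subgroup G) (hθ : IsSignalizerFunctorOn ⊤ θ)
    (N : Subgroup G) [N.Normal] (hNθ : IsThetaSubgroup θ N)
    [MulDistribMulAction A (G ⧸ N)]
    (hcompat : ∀ (a : A) (g : G), ((a • g : G) : G ⧸ N) = a • (g : G ⧸ N))
    (θbar : A → Subgroup (G ⧸ N))
    (hθbar : ∀ a : A, θbar a = (θ a).map (QuotientGroup.mk' N)) :
    IsSignalizerFunctorOn ⊤ θbar ∧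
      (∀ B : Subgroup A, B ≠ ⊥ →
        thetaB θbar B = (thetaB θ B).map (QuotientGroup.mk' N)) ∧
      ((∃ K : Subgroup G, IsCompletionOn ⊤ θ K) ↔
        (∃ Kbar : Subgroup (G ⧸ N), IsCompletionOn ⊤ θbar Kbar)) ∧
      (signNorm r θbar ≤ signNorm r θ ∧
        (signNorm r θbar = signNorm r θ ↔ N = ⊥)) := by
  classical
  obtain ⟨hcomm, hpow⟩ := hA
  obtain ⟨hNfin, hNinv, hNcop0, hNfunc⟩ := hNθ
  haveI : Finite ↥N := hNfin
  haveI : Nontrivial A := by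
    rcases subsingleton_or_nontrivial A with h | h
    · exact absurd isCyclic_of_subsingleton hnc
    · exact h
  have hrA : r ∣ Nat.card A := r_dvd_card hr hpow
  have hcardA : Nat.card ↥(⊤ : Subgroup A) = Nat.card A := Subgroup.card_top
  have hNcop : (Nat.card ↥N).Coprime (Nat.card A) := hNcop0
  set φ := QuotientGroup.mk' N with hφ
  -- θ facts
  have hθfin : ∀ a : A, a ≠ 1 → Finite (θ a) := fun a ha => (hθ a (Subgroup.mem_top a) ha).1
  have hθinv : ∀ a : A, a ≠ 1 → ∀ b : A, b • θ a = θ a :=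
    fun a ha b => (hθ a (Subgroup.mem_top a) ha).2.1 b (Subgroup.mem_top b)
  have hθfix : ∀ a : A, a ≠ 1 → θ a ≤ fixedSub G a :=
    fun a ha => (hθ a (Subgroup.mem_top a) ha).2.2.1
  have hθcop : ∀ a : A, a ≠ 1 → (Nat.card (θ a)).Coprime (Nat.card A) := fun a ha => by
    have h1 := (hθ a (Subgroup.mem_top a) ha).2.2.2.1
    rwa [hcardA] at h1
  have hθfun : ∀ a : A, a ≠ 1 → ∀ b : A, b ≠ 1 → θ a ⊓ fixedSub G b ≤ θ b :=
    fun a ha b hb => (hθ a (Subgroup.mem_top a) ha).2.2.2.2 b (Subgroup.mem_top b) hb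
  have hnotdvd : ∀ H : Subgroup G, (Nat.card H).Coprime (Nat.card A) →
      ¬ r ∣ Nat.card ↥(H ⊓ N) :=
    fun H hco => not_dvd_of_coprime hr.one_lt hco hrA (Subgroup.card_dvd_of_le inf_le_left)
  have hmapfin : ∀ (H : Subgroup G), Finite H → Finite (H.map φ) := by
    intro H hf
    haveI := hf
    apply Finite.of_surjective
      (f := fun x : ↥H => (⟨φ x, Subgroup.mem_map_of_mem φ x.2⟩ : ↥(H.map φ)))
    rintro ⟨y, hy⟩
    obtain ⟨g, hg, rfl⟩ := hy
    exact ⟨⟨g, hg⟩, rfl⟩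
  -- θbar basic facts
  have hbarfin : ∀ a : A, a ≠ 1 → Finite (θbar a) := by
    intro a ha
    rw [hθbar a]
    exact hmapfin (θ a) (hθfin a ha)
  have hbarfix : ∀ a : A, a ≠ 1 → θbar a ≤ fixedSub (G ⧸ N) a := by
    intro a ha x hx
    rw [hθbar a] at hx
    obtain ⟨g, hg, rfl⟩ := hx
    show a • (φ g) = φ g
    rw [QuotientGroup.mk'_apply, ← hcompat]
    exact congrArg _ (hθfix a ha hg)
  have hbarinv : ∀ a : A, a ≠ 1 → ∀ b : A, b • θbar a = θbar a := by
    intro a ha b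
    rw [hθbar a, ← map_pointwise_smul N hcompat b (θ a), hθinv a ha b]
  have hbardvd : ∀ a : A, a ≠ 1 → Nat.card (θbar a) ∣ Nat.card (θ a) := by
    intro a ha
    haveI := hθfin a ha
    rw [hθbar a]
    exact ⟨_, (card_map_mul N (θ a)).symm⟩
  -- Part (i)
  have part1 : IsSignalizerFunctorOn ⊤ θbar := by
    intro a _ ha
    refine ⟨hbarfin a ha, fun b _ => hbarinv a ha b, hbarfix a ha, ?_, ?_⟩
    · rw [hcardA]
      exact Nat.Coprime.coprime_dvd_left (hbardvd a ha) (hθcop a ha)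
    · intro b _ hb x hx
      obtain ⟨hx1, hx2⟩ := Subgroup.mem_inf.mp hx
      haveI := hθfin a ha
      rw [hθbar a] at hx1
      have hx2' : b • x = x := hx2
      obtain ⟨g, hgθ, hgfix, hgx⟩ := lift_fixed N hr hpow hcompat (Subgroup.zpowers b) (θ a)
        (fun c _ => hθinv a ha c) (hnotdvd (θ a) (hθcop a ha)) hx1 (fixed_zpowers hx2')
      rw [hθbar b]
      refine ⟨g, hθfun a ha b hb (Subgroup.mem_inf.mpr
        ⟨hgθ, show g ∈ fixedSub G b from hgfix b (Subgroup.mem_zpowers b)⟩), ?_⟩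
      rw [QuotientGroup.mk'_apply]
      exact hgx
  -- Part (ii)
  have part2 : ∀ B : Subgroup A, B ≠ ⊥ → thetaB θbar B = (thetaB θ B).map φ := by
    intro B hB
    obtain ⟨b₀, hb₀B, hb₀⟩ := (Subgroup.bot_or_exists_ne_one B).resolve_left hB
    apply le_antisymm
    · intro x hx
      have hx0 : x ∈ θbar b₀ := mem_thetaB.mp hx b₀ hb₀B hb₀
      rw [hθbar b₀] at hx0
      have hfixB : ∀ b ∈ B, b • x = x := by
        intro b hb
        by_cases h1 : b = 1
        · rw [h1, one_smul]
        · exact hbarfix b h1 (mem_thetaB.mp hx b hb h1)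
      haveI := hθfin b₀ hb₀
      obtain ⟨g, hgθ, hgfix, hgx⟩ := lift_fixed N hr hpow hcompat B (θ b₀)
        (fun c _ => hθinv b₀ hb₀ c) (hnotdvd (θ b₀) (hθcop b₀ hb₀)) hx0 hfixB
      refine ⟨g, mem_thetaB.mpr fun b hb h1 => hθfun b₀ hb₀ b h1 (Subgroup.mem_inf.mpr
        ⟨hgθ, show g ∈ fixedSub G b from hgfix b hb⟩), ?_⟩
      rw [QuotientGroup.mk'_apply]
      exact hgx
    · intro x hx
      obtain ⟨g, hg, rfl⟩ := hx
      apply mem_thetaB.mpr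
      intro b hb h1
      rw [hθbar b]
      exact ⟨g, mem_thetaB.mp hg b hb h1, rfl⟩
  -- Part (iii)
  have part3fwd : (∃ K : Subgroup G, IsCompletionOn ⊤ θ K) →
      ∃ Kb : Subgroup (G ⧸ N), IsCompletionOn ⊤ θbar Kb := by
    rintro ⟨K, hKfin, hKinv, hKcop0, hKc⟩
    haveI := hKfin
    have hKcop : (Nat.card K).Coprime (Nat.card A) := by rwa [hcardA] at hKcop0
    refine ⟨K.map φ, hmapfin K hKfin, ?_, ?_, ?_⟩
    · intro b _
      rw [← map_pointwise_smul N hcompat b K, hKinv b (Subgroup.mem_top b)]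
    · rw [hcardA]
      exact Nat.Coprime.coprime_dvd_left ⟨_, (card_map_mul N K).symm⟩ hKcop
    · intro b _ hb
      apply le_antisymm
      · intro x hx
        obtain ⟨hx1, hx2⟩ := Subgroup.mem_inf.mp hx
        have hx2' : b • x = x := hx2
        obtain ⟨g, hgK, hgfix, hgx⟩ := lift_fixed N hr hpow hcompat (Subgroup.zpowers b) K
          (fun c _ => hKinv c (Subgroup.mem_top c)) (hnotdvd K hKcop) hx1 (fixed_zpowers hx2')
        rw [hθbar b, ← hKc b (Subgroup.mem_top b) hb]
        refine ⟨g, Subgroup.mem_inf.mpr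
          ⟨hgK, show g ∈ fixedSub G b from hgfix b (Subgroup.mem_zpowers b)⟩, ?_⟩
        rw [QuotientGroup.mk'_apply]
        exact hgx
      · rw [hθbar b, ← hKc b (Subgroup.mem_top b) hb]
        intro x hx
        obtain ⟨g, hg, rfl⟩ := hx
        obtain ⟨hg1, hg2⟩ := Subgroup.mem_inf.mp hg
        refine Subgroup.mem_inf.mpr ⟨⟨g, hg1, rfl⟩, ?_⟩
        show b • (φ g) = φ g
        rw [QuotientGroup.mk'_apply, ← hcompat]
        exact congrArg _ hg2
  have part3bwd : (∃ Kb : Subgroup (G ⧸ N), IsCompletionOn ⊤ θbar Kb) →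
      ∃ K : Subgroup G, IsCompletionOn ⊤ θ K := by
    rintro ⟨Kb, hKfin, hKinv, hKcop0, hKc⟩
    haveI := hKfin
    have hKcop : (Nat.card Kb).Coprime (Nat.card A) := by rwa [hcardA] at hKcop0
    obtain ⟨hLfin, hLcard⟩ := comap_mk_facts N Kb
    refine ⟨Kb.comap φ, hLfin, ?_, ?_, ?_⟩
    · intro b _
      ext x
      rw [Subgroup.mem_pointwise_smul_iff_inv_smul_mem]
      show φ (b⁻¹ • x) ∈ Kb ↔ φ x ∈ Kb
      rw [QuotientGroup.mk'_apply, QuotientGroup.mk'_apply, hcompat]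
      constructor
      · intro h
        have h2 := smul_mem_of_inv (hKinv b (Subgroup.mem_top b)) h
        rwa [smul_inv_smul] at h2
      · intro h
        exact smul_mem_of_inv (hKinv b⁻¹ (Subgroup.mem_top b⁻¹)) h
    · rw [hcardA, hLcard]
      exact Nat.Coprime.mul hKcop hNcop
    · intro b _ hb
      apply le_antisymm
      · intro x hx
        obtain ⟨hx1, hx2⟩ := Subgroup.mem_inf.mp hx
        have hx2' : b • x = x := hx2
        have h1 : φ x ∈ Kb ⊓ fixedSub (G ⧸ N) b := Subgroup.mem_inf.mpr ⟨hx1, by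
          show b • (φ x) = φ x
          rw [QuotientGroup.mk'_apply, ← hcompat]
          exact congrArg _ hx2'⟩
        rw [hKc b (Subgroup.mem_top b) hb, hθbar b] at h1
        obtain ⟨y, hyθ, hyx⟩ := h1
        have hn : y⁻¹ * x ∈ N := by
          refine (QuotientGroup.eq_one_iff _).mp ?_
          rw [QuotientGroup.mk_mul, QuotientGroup.mk_inv]
          rw [show ((y : G) : G ⧸ N) = ((x : G) : G ⧸ N) from by
            rw [← QuotientGroup.mk'_apply, ← QuotientGroup.mk'_apply, hyx]]
          rw [inv_mul_cancel]
        have hyfix : b • y = y := hθfix b hb hyθ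
        have hnfix : b • (y⁻¹ * x) = y⁻¹ * x := by
          rw [smul_mul', smul_inv', hyfix, hx2']
        have hnθ : y⁻¹ * x ∈ θ b := hNfunc b hb (Subgroup.mem_inf.mpr
          ⟨hn, show y⁻¹ * x ∈ fixedSub G b from hnfix⟩)
        have hxeq : x = y * (y⁻¹ * x) := by rw [mul_inv_cancel_left]
        rw [hxeq]
        exact mul_mem hyθ hnθ
      · intro x hx
        refine Subgroup.mem_inf.mpr ⟨?_, hθfix b hb hx⟩
        have h1 : φ x ∈ θbar b := by rw [hθbar b]; exact ⟨x, hx, rfl⟩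
        rw [← hKc b (Subgroup.mem_top b) hb] at h1
        exact (Subgroup.mem_inf.mp h1).1
  -- Part (iv)
  haveI : Finite (Subgroup A) :=
    Finite.of_injective (fun B : Subgroup A => (B : Set A)) SetLike.coe_injective
  haveI : Fintype (Subgroup A) := Fintype.ofFinite _
  have htop_ne : (⊤ : Subgroup A) ≠ ⊥ := by
    intro h
    obtain ⟨a, ha⟩ := exists_ne (1 : A)
    exact ha (Subgroup.mem_bot.mp (h ▸ Subgroup.mem_top a))
  have hcardAr : Nat.card A ≠ r := by
    intro h
    haveI : Fact r.Prime := ⟨hr⟩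
    exact hnc (isCyclic_of_prime_card h)
  have hBne : ∀ B : Subgroup A, B.index = r → B ≠ ⊥ := by
    intro B hB h
    rw [h, Subgroup.index_bot] at hB
    exact hcardAr hB
  -- the N-functor
  set θN : A → Subgroup G := fun a => N ⊓ fixedSub G a with hθN
  have hθNB : ∀ B : Subgroup A, B ≠ ⊥ → thetaB θN B = thetaB θ B ⊓ N := by
    intro B hB
    obtain ⟨b₀, hb₀B, hb₀⟩ := (Subgroup.bot_or_exists_ne_one B).resolve_left hB
    apply le_antisymm
    · intro x hx
      refine Subgroup.mem_inf.mpr ⟨mem_thetaB.mpr fun b hb h1 => ?_, ?_⟩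
      · exact hNfunc b h1 (mem_thetaB.mp hx b hb h1)
      · exact (Subgroup.mem_inf.mp (mem_thetaB.mp hx b₀ hb₀B hb₀)).1
    · intro x hx
      obtain ⟨hx1, hx2⟩ := Subgroup.mem_inf.mp hx
      refine mem_thetaB.mpr fun b hb h1 => Subgroup.mem_inf.mpr ⟨hx2, ?_⟩
      exact hθfix b h1 (mem_thetaB.mp hx1 b hb h1)
  -- finiteness of the thetaB groups
  have hfinθB : ∀ B : Subgroup A, B ≠ ⊥ → Finite (thetaB θ B) := by
    intro B hB
    obtain ⟨b₀, hb₀B, hb₀⟩ := (Subgroup.bot_or_exists_ne_one B).resolve_left hB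
    haveI := hθfin b₀ hb₀
    exact finite_of_le (fun x hx => mem_thetaB.mp hx b₀ hb₀B hb₀)
  have hfinθNB : ∀ B : Subgroup A, B ≠ ⊥ → Finite (thetaB θN B) := by
    intro B hB
    rw [hθNB B hB]
    exact finite_of_le inf_le_right
  have hfinbarB : ∀ B : Subgroup A, B ≠ ⊥ → Finite (thetaB θbar B) := by
    intro B hB
    rw [part2 B hB]
    exact hmapfin _ (hfinθB B hB)
  -- card identities
  have htbn : ∀ B : Subgroup A, B ≠ ⊥ →
      Nat.card (thetaB θbar B) * Nat.card (thetaB θN B) = Nat.card (thetaB θ B) := by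
    intro B hB
    haveI := hfinθB B hB
    rw [part2 B hB, hθNB B hB]
    exact card_map_mul N (thetaB θ B)
  -- relindex identities
  have hrelθ : ∀ B : Subgroup A, B ≠ ⊥ →
      (thetaB θ ⊤).relIndex (thetaB θ B) * Nat.card (thetaB θ ⊤) = Nat.card (thetaB θ B) := by
    intro B hB
    haveI := hfinθB B hB
    exact relindex_mul_card (thetaB_anti θ B)
  have hrelbar : ∀ B : Subgroup A, B ≠ ⊥ →
      (thetaB θbar ⊤).relIndex (thetaB θbar B) * Nat.card (thetaB θbar ⊤)
        = Nat.card (thetaB θbar B) := by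
    intro B hB
    haveI := hfinbarB B hB
    exact relindex_mul_card (thetaB_anti θbar B)
  have hrelN : ∀ B : Subgroup A, B ≠ ⊥ →
      (thetaB θN ⊤).relIndex (thetaB θN B) * Nat.card (thetaB θN ⊤)
        = Nat.card (thetaB θN B) := by
    intro B hB
    haveI := hfinθNB B hB
    exact relindex_mul_card (thetaB_anti θN B)
  -- positivity
  have hposθ : ∀ B : Subgroup A, B ≠ ⊥ → 0 < Nat.card (thetaB θ B) := by
    intro B hB
    haveI := hfinθB B hB
    exact Nat.card_pos
  have hposbar : ∀ B : Subgroup A, B ≠ ⊥ → 0 < Nat.card (thetaB θbar B) := by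
    intro B hB
    haveI := hfinbarB B hB
    exact Nat.card_pos
  have hposN : ∀ B : Subgroup A, B ≠ ⊥ → 0 < Nat.card (thetaB θN B) := by
    intro B hB
    haveI := hfinθNB B hB
    exact Nat.card_pos
  -- termwise relindex factorization
  have hterm : ∀ B : Subgroup A, B ≠ ⊥ →
      (thetaB θ ⊤).relIndex (thetaB θ B) =
        (thetaB θbar ⊤).relIndex (thetaB θbar B) * (thetaB θN ⊤).relIndex (thetaB θN B) := by
    intro B hB
    have h1 : (thetaB θ ⊤).relIndex (thetaB θ B) *
        (Nat.card (thetaB θbar ⊤) * Nat.card (thetaB θN ⊤)) =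
        ((thetaB θbar ⊤).relIndex (thetaB θbar B) * (thetaB θN ⊤).relIndex (thetaB θN B)) *
        (Nat.card (thetaB θbar ⊤) * Nat.card (thetaB θN ⊤)) := by
      rw [htbn ⊤ htop_ne]
      rw [hrelθ B hB, ← htbn B hB, ← hrelbar B hB, ← hrelN B hB, ← htbn ⊤ htop_ne]
      ring
    have hpos : 0 < Nat.card (thetaB θbar ⊤) * Nat.card (thetaB θN ⊤) :=
      Nat.mul_pos (hposbar ⊤ htop_ne) (hposN ⊤ htop_ne)
    exact Nat.eq_of_mul_eq_mul_right hpos h1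
  -- assemble the product identity
  set S : Finset (Subgroup A) := Finset.univ.filter (fun B : Subgroup A => B.index = r) with hS
  have hSB : ∀ B ∈ S, B ≠ ⊥ := by
    intro B hB
    rw [hS, Finset.mem_filter] at hB
    exact hBne B hB.2
  set nu : ℕ := Nat.card (thetaB θN ⊤) *
      ∏ B ∈ S, (thetaB θN ⊤).relIndex (thetaB θN B) with hnu
  have hfactor : signNorm r θ = signNorm r θbar * nu := by
    rw [signNorm_eq r θ, signNorm_eq r θbar, hnu, ← hS]
    rw [Finset.prod_congr rfl (fun B hB => hterm B (hSB B hB))]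
    rw [Finset.prod_mul_distrib, ← htbn ⊤ htop_ne]
    ring
  have hrelpos : ∀ B ∈ S, 0 < (thetaB θN ⊤).relIndex (thetaB θN B) := by
    intro B hB
    have h1 := hrelN B (hSB B hB)
    rcases Nat.eq_zero_or_pos ((thetaB θN ⊤).relIndex (thetaB θN B)) with h | h
    · rw [h, zero_mul] at h1
      exact absurd h1.symm (hposN B (hSB B hB)).ne'
    · exact h
  have hnupos : 0 < nu := by
    rw [hnu]
    exact Nat.mul_pos (hposN ⊤ htop_ne) (Finset.prod_pos hrelpos)
  have hsignbarpos : 0 < signNorm r θbar := by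
    rw [signNorm_eq r θbar, ← hS]
    refine Nat.mul_pos (hposbar ⊤ htop_ne) (Finset.prod_pos ?_)
    intro B hB
    have h1 := hrelbar B (hSB B hB)
    rcases Nat.eq_zero_or_pos ((thetaB θbar ⊤).relIndex (thetaB θbar B)) with h | h
    · rw [h, zero_mul] at h1
      exact absurd h1.symm (hposbar B (hSB B hB)).ne'
    · exact h
  -- inequality
  have hle : signNorm r θbar ≤ signNorm r θ := by
    rw [hfactor]
    exact Nat.le_mul_of_pos_right _ hnupos
  -- equality iff nu = 1
  have heqiff : signNorm r θbar = signNorm r θ ↔ nu = 1 := by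
    constructor
    · intro h
      rw [hfactor] at h
      nth_rewrite 1 [← mul_one (signNorm r θbar)] at h
      exact (Nat.eq_of_mul_eq_mul_left hsignbarpos h).symm
    · intro h
      rw [hfactor, h, mul_one]
  -- nu = 1 → N = ⊥
  have hfwd : nu = 1 → N = ⊥ := by
    intro h
    rw [hnu] at h
    have h1 : Nat.card (thetaB θN ⊤) = 1 := Nat.eq_one_of_mul_eq_one_right h
    have h2 : (∏ B ∈ S, (thetaB θN ⊤).relIndex (thetaB θN B)) = 1 :=
      Nat.eq_one_of_mul_eq_one_left h
    have hall : ∀ B ∈ S, (thetaB θN ⊤).relIndex (thetaB θN B) = 1 := by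
      have := (Finset.prod_eq_one_iff_of_one_le' (fun B hB => hrelpos B hB)).mp h2
      exact this
    have hzero : ∀ B : Subgroup A, B.index = r → thetaB θN B = ⊥ := by
      intro B hB
      have hBS : B ∈ S := by rw [hS, Finset.mem_filter]; exact ⟨Finset.mem_univ B, hB⟩
      have h3 := hrelN B (hBne B hB)
      rw [hall B hBS, one_mul, h1] at h3
      exact Subgroup.card_eq_one.mp h3.symm
    apply key_trivial hcomm hr hpow N hNinv hNcop
    intro B hB g hg hfixg
    have hmem : g ∈ thetaB θN B := mem_thetaB.mpr fun b hb h1 =>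
      Subgroup.mem_inf.mpr ⟨hg, show g ∈ fixedSub G b from hfixg b hb⟩
    rw [hzero B hB] at hmem
    exact Subgroup.mem_bot.mp hmem
  -- N = ⊥ → nu = 1
  have hbwd : N = ⊥ → nu = 1 := by
    intro h
    have hNbot : ∀ B : Subgroup A, B ≠ ⊥ → thetaB θN B = ⊥ := by
      intro B hB
      rw [hθNB B hB, h]
      exact inf_bot_eq _
    rw [hnu, hNbot ⊤ htop_ne]
    rw [show (Nat.card ↥(⊥ : Subgroup G)) = 1 from Subgroup.card_bot]
    rw [one_mul]
    apply Finset.prod_eq_one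
    intro B hB
    rw [hNbot B (hSB B hB)]
    exact Subgroup.relIndex_self ⊥
  exact ⟨part1, part2, ⟨part3fwd, part3bwd⟩, hle, heqiff.trans ⟨hfwd, hbwd⟩⟩
end

section
/- Let r be a prime, let A be a noncyclic elementary abelian r-group acting on a (possibly infinite) group G, and let θ be an A-signalizer functor on G. Then for every a ∈ A∖{1}, θ(a) = ⟨θ(B) : B ∈ hyp(A) and a ∈ B⟩. -/
open Pointwise

namespace SignalizerAux

open Pointwise Subgroup

section Basic

variable {A : Type*} [Group A]

theorem mem_fixedSub {H : Type*} [Group H] [MulDistribMulAction A H] {a : A} {x : H} :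
    x ∈ fixedSub H a ↔ a • x = x := Iff.rfl

/-- The subgroup of points fixed by every element of `B`. -/
def fixedBySub (A H : Type*) [Group A] [Group H] [MulDistribMulAction A H]
    (B : Subgroup A) : Subgroup H :=
  ⨅ (b : A) (_ : b ∈ B), fixedSub H b

theorem mem_fixedBySub {H : Type*} [Group H] [MulDistribMulAction A H] {B : Subgroup A} {x : H} :
    x ∈ fixedBySub A H B ↔ ∀ b ∈ B, b • x = x := by
  simp only [fixedBySub, Subgroup.mem_iInf]
  exact Iff.rfl

theorem isPGroup_of_elemAb {r : ℕ} (hA : IsElementaryAbelian r A) : IsPGroup r A :=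
  fun a => ⟨1, by rw [pow_one]; exact hA.2 a⟩

theorem orderOf_eq_of_elemAb {r : ℕ} (hr : r.Prime) (hA : IsElementaryAbelian r A) {a : A}
    (ha : a ≠ 1) : orderOf a = r := by
  rcases hr.eq_one_or_self_of_dvd _ (orderOf_dvd_of_pow_eq_one (hA.2 a)) with h | h
  · exact absurd (orderOf_eq_one_iff.mp h) ha
  · exact h

theorem zpowers_normal_of_elemAb {r : ℕ} (hA : IsElementaryAbelian r A) (a : A) :
    (Subgroup.zpowers a).Normal :=
  ⟨fun n hn g => by rw [hA.1 g n, mul_assoc, mul_inv_cancel, mul_one]; exact hn⟩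

theorem elemAb_quotient {r : ℕ} (hA : IsElementaryAbelian r A) (N : Subgroup A) [N.Normal] :
    IsElementaryAbelian r (A ⧸ N) := by
  constructor
  · intro x y
    obtain ⟨x, rfl⟩ := QuotientGroup.mk_surjective x
    obtain ⟨y, rfl⟩ := QuotientGroup.mk_surjective y
    rw [← QuotientGroup.mk_mul, ← QuotientGroup.mk_mul, hA.1]
  · intro x
    obtain ⟨x, rfl⟩ := QuotientGroup.mk_surjective x
    rw [← QuotientGroup.mk_pow, hA.2, QuotientGroup.mk_one]

end Basic

section Hyperplanes

/-- Every nontrivial finite elementary abelian `r`-group has a subgroup of index `r`. -/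
theorem exists_index_r {r : ℕ} (hr : r.Prime) :
    ∀ (n : ℕ) (A : Type u) [Group A] [Finite A], Nat.card A ≤ n →
      IsElementaryAbelian r A → Nat.card A ≠ 1 → ∃ B : Subgroup A, B.index = r := by
  intro n
  induction n using Nat.strong_induction_on with
  | _ n IH =>
  intro A _ _ hn hA hA1
  haveI : Nontrivial A := Finite.one_lt_card_iff_nontrivial.mp
    (lt_of_le_of_ne Nat.card_pos (Ne.symm hA1))
  obtain ⟨a, ha⟩ := exists_ne (1 : A)
  have horder : orderOf a = r := orderOf_eq_of_elemAb hr hA ha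
  have hzcard : Nat.card (Subgroup.zpowers a) = r := (Nat.card_zpowers a).trans horder
  haveI := zpowers_normal_of_elemAb hA a
  by_cases htop : Subgroup.zpowers a = ⊤
  · refine ⟨⊥, ?_⟩
    rw [Subgroup.index_bot, ← Subgroup.card_top (G := A), ← htop, hzcard]
  · have hcard : Nat.card A = Nat.card (A ⧸ Subgroup.zpowers a) * Nat.card (Subgroup.zpowers a) :=
      Subgroup.card_eq_card_quotient_mul_card_subgroup _
    have hq1 : Nat.card (A ⧸ Subgroup.zpowers a) ≠ 1 := by
      intro h
      exact htop (Subgroup.eq_top_of_card_eq _ (by rw [hcard, h, one_mul, hzcard]))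
    have hqlt : Nat.card (A ⧸ Subgroup.zpowers a) < n := by
      have h1 : 0 < Nat.card (A ⧸ Subgroup.zpowers a) := Nat.card_pos
      have h2 : 2 ≤ r := hr.two_le
      calc Nat.card (A ⧸ Subgroup.zpowers a)
          < Nat.card (A ⧸ Subgroup.zpowers a) * Nat.card (Subgroup.zpowers a) := by
            rw [hzcard]
            exact (Nat.lt_mul_iff_one_lt_right h1).mpr (by omega)
        _ = Nat.card A := hcard.symm
        _ ≤ n := hn
    obtain ⟨Bb, hBb⟩ := IH _ hqlt (A ⧸ Subgroup.zpowers a) le_rfl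
      (elemAb_quotient hA _) hq1
    refine ⟨Bb.comap (QuotientGroup.mk' _), ?_⟩
    rw [Subgroup.index_comap_of_surjective _ (QuotientGroup.mk'_surjective _)]
    exact hBb

/-- For `A` noncyclic there is an index-`r` subgroup containing any given `a ≠ 1`. -/
theorem exists_index_r_mem {r : ℕ} (hr : r.Prime) {A : Type*} [Group A] [Finite A]
    (hA : IsElementaryAbelian r A) (hnc : ¬ IsCyclic A) {a : A} (ha : a ≠ 1) :
    ∃ B : Subgroup A, B.index = r ∧ a ∈ B := by
  haveI := zpowers_normal_of_elemAb hA a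
  have htop : Subgroup.zpowers a ≠ ⊤ := by
    intro h
    exact hnc ⟨⟨a, (Subgroup.eq_top_iff' _).mp h⟩⟩
  have hq1 : Nat.card (A ⧸ Subgroup.zpowers a) ≠ 1 := by
    intro h
    have hcard : Nat.card A = Nat.card (A ⧸ Subgroup.zpowers a) * Nat.card (Subgroup.zpowers a) :=
      Subgroup.card_eq_card_quotient_mul_card_subgroup _
    exact htop (Subgroup.eq_top_of_card_eq _ (by rw [hcard, h, one_mul]))
  obtain ⟨Bb, hBb⟩ := exists_index_r hr (Nat.card (A ⧸ Subgroup.zpowers a))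
    (A ⧸ Subgroup.zpowers a) le_rfl (elemAb_quotient hA _) hq1
  refine ⟨Bb.comap (QuotientGroup.mk' _), ?_, ?_⟩
  · rw [Subgroup.index_comap_of_surjective _ (QuotientGroup.mk'_surjective _)]
    exact hBb
  · show QuotientGroup.mk' _ a ∈ Bb
    have : QuotientGroup.mk' (Subgroup.zpowers a) a = 1 :=
      (QuotientGroup.eq_one_iff a).mpr (Subgroup.mem_zpowers a)
    rw [this]
    exact Bb.one_mem

theorem sup_zpowers_eq_top {r : ℕ} (hr : r.Prime) {A : Type*} [Group A]
    {B : Subgroup A} (hB : B.index = r) {a : A} (ha : a ∉ B) :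
    B ⊔ Subgroup.zpowers a = ⊤ := by
  have hdvd : (B ⊔ Subgroup.zpowers a).index ∣ r := hB ▸ Subgroup.index_dvd_of_le le_sup_left
  rcases hr.eq_one_or_self_of_dvd _ hdvd with h | h
  · exact Subgroup.index_eq_one.mp h
  · exfalso
    have hrel : B.relIndex (B ⊔ Subgroup.zpowers a) * (B ⊔ Subgroup.zpowers a).index = B.index :=
      Subgroup.relIndex_mul_index le_sup_left
    rw [h, hB] at hrel
    have : B.relIndex (B ⊔ Subgroup.zpowers a) = 1 :=
      Nat.eq_of_mul_eq_mul_right hr.pos (by rw [one_mul]; exact hrel)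
    have := Subgroup.relIndex_eq_one.mp this
    exact ha (this (Subgroup.mem_sup_right (Subgroup.mem_zpowers a)))

end Hyperplanes

end SignalizerAux
namespace SignalizerAux

open Pointwise Subgroup

section Actions

variable {A H : Type*} [Group A] [Group H] [MulDistribMulAction A H]

/-- Restriction of an action to an invariant subgroup. -/
def subAction (N : Subgroup H) (hN : ∀ a : A, a • N = N) : MulDistribMulAction A ↥N where
  smul a x := ⟨a • (x : H), by
    have := Subgroup.smul_mem_pointwise_smul (x : H) a N x.2
    rwa [hN a] at this⟩
  one_smul x := Subtype.ext (one_smul A (x : H))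
  mul_smul a b x := Subtype.ext (mul_smul a b (x : H))
  smul_mul a x y := Subtype.ext (smul_mul' a (x : H) (y : H))
  smul_one a := Subtype.ext (smul_one a)

/-- Induced action on the quotient by an invariant normal subgroup. -/
def quotAction (N : Subgroup H) [N.Normal] (hN : ∀ a : A, a • N = N) :
    MulDistribMulAction A (H ⧸ N) where
  smul a := QuotientGroup.map N N (MulDistribMulAction.toMonoidHom H a) (by
    intro x hx
    simp only [Subgroup.mem_comap, MulDistribMulAction.toMonoidHom_apply]
    have := Subgroup.smul_mem_pointwise_smul x a N hx
    rwa [hN a] at this)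
  one_smul q := by
    refine QuotientGroup.induction_on q fun h => ?_
    show QuotientGroup.map N N _ _ _ = _
    rw [QuotientGroup.map_mk]
    simp
  mul_smul a b q := by
    refine QuotientGroup.induction_on q fun h => ?_
    show QuotientGroup.map N N _ _ _ = QuotientGroup.map N N _ _ (QuotientGroup.map N N _ _ _)
    rw [QuotientGroup.map_mk, QuotientGroup.map_mk, QuotientGroup.map_mk]
    simp [mul_smul]
  smul_mul a q₁ q₂ := by
    refine QuotientGroup.induction_on q₁ fun h₁ => QuotientGroup.induction_on q₂ fun h₂ => ?_
    show QuotientGroup.map N N _ _ _ = QuotientGroup.map N N _ _ _ * QuotientGroup.map N N _ _ _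
    rw [← QuotientGroup.mk_mul, QuotientGroup.map_mk, QuotientGroup.map_mk, QuotientGroup.map_mk]
    simp [smul_mul']
  smul_one a := by
    show QuotientGroup.map N N _ _ 1 = 1
    simp

end Actions

section FixedPoints

variable {A : Type*} [Group A] [Finite A]

/-- A fixed point exists in every invariant coset (coprime action). -/
theorem exists_fixed_preimage {r : ℕ} (hr : r.Prime) (hA : IsElementaryAbelian r A)
    {H : Type*} [Group H] [Finite H] [MulDistribMulAction A H]
    (hcard : ¬ r ∣ Nat.card H) (N : Subgroup H) (B : Subgroup A) (q : H ⧸ N)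
    (hq : ∀ b ∈ B, ∀ x : H, QuotientGroup.mk x = q → QuotientGroup.mk (b • x) = q) :
    ∃ h : H, QuotientGroup.mk h = q ∧ ∀ b ∈ B, b • h = h := by
  haveI : Fact r.Prime := ⟨hr⟩
  obtain ⟨h₀, rfl⟩ := QuotientGroup.mk_surjective q
  let X := {x : H // QuotientGroup.mk x = (QuotientGroup.mk h₀ : H ⧸ N)}
  letI : MulAction ↥B X :=
    { smul := fun b x => ⟨(b : A) • (x : H), hq b b.2 x.1 x.2⟩
      one_smul := fun x => Subtype.ext (one_smul A (x : H))
      mul_smul := fun a b x => Subtype.ext (mul_smul (a : A) (b : A) (x : H)) }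
  have e : X ≃ ↥N :=
    { toFun := fun x => ⟨h₀⁻¹ * (x : H), QuotientGroup.eq.mp x.2.symm⟩
      invFun := fun n => ⟨h₀ * (n : H), QuotientGroup.eq.mpr (by simpa using N.inv_mem n.2)⟩
      left_inv := fun x => by ext; simp
      right_inv := fun n => by ext; simp }
  have hXcard : Nat.card X = Nat.card N := Nat.card_congr e
  have hX : ¬ r ∣ Nat.card X := by
    rw [hXcard]
    intro hdvd
    exact hcard (hdvd.trans (Subgroup.card_subgroup_dvd_card N))
  have hpB : IsPGroup r ↥B := (isPGroup_of_elemAb hA).to_subgroup B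
  obtain ⟨⟨x, hxmem⟩, hxfix⟩ := hpB.nonempty_fixed_point_of_prime_not_dvd_card X hX
  refine ⟨x, hxmem, fun b hb => ?_⟩
  have := hxfix ⟨b, hb⟩
  exact congrArg Subtype.val this

/-- An invariant Sylow subgroup exists (coprime action). -/
theorem exists_invariant_sylow {r : ℕ} (hr : r.Prime) (hA : IsElementaryAbelian r A)
    {H : Type*} [Group H] [Finite H] [MulDistribMulAction A H]
    (hcard : ¬ r ∣ Nat.card H) (q : ℕ) [Fact q.Prime] :
    ∃ Q : Sylow q H, ∀ a : A, a • Q.toSubgroup = Q.toSubgroup := by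
  haveI : Fact r.Prime := ⟨hr⟩
  obtain ⟨P⟩ := (inferInstance : Nonempty (Sylow q H))
  have hdvd : Nat.card (Sylow q H) ∣ Nat.card H :=
    (P.card_dvd_index).trans (Subgroup.index_dvd_card _)
  have hnd : ¬ r ∣ Nat.card (Sylow q H) := fun h => hcard (h.trans hdvd)
  obtain ⟨Q, hQ⟩ := (isPGroup_of_elemAb hA).nonempty_fixed_point_of_prime_not_dvd_card
    (Sylow q H) hnd
  refine ⟨Q, fun a => ?_⟩
  have : a • Q = Q := hQ a
  rw [← Sylow.pointwise_smul_def, this]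

theorem eq_top_of_sylows_le {H : Type*} [Group H] [Finite H] (S : Subgroup H)
    (h : ∀ q : ℕ, q.Prime → q ∣ Nat.card H →
      ∃ Q : Subgroup H, Nat.card Q = q ^ (Nat.card H).factorization q ∧ Q ≤ S) :
    S = ⊤ := by
  rw [← Subgroup.index_eq_one]
  by_contra hne
  obtain ⟨p, hp, hpdvd⟩ := Nat.exists_prime_and_dvd hne
  have hidvd : S.index ∣ Nat.card H := Subgroup.index_dvd_card S
  obtain ⟨Q, hQcard, hQle⟩ := h p hp (hpdvd.trans hidvd)
  have h1 : p ^ (Nat.card H).factorization p ∣ Nat.card S :=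
    hQcard ▸ Subgroup.card_dvd_of_le hQle
  have h3 : Nat.card S * S.index = Nat.card H := Subgroup.card_mul_index S
  have h2 : p ^ ((Nat.card H).factorization p) * p ∣ Nat.card S * S.index :=
    mul_dvd_mul h1 hpdvd
  rw [h3, ← pow_succ] at h2
  exact Nat.pow_succ_factorization_not_dvd Nat.card_pos.ne' hp h2

end FixedPoints

end SignalizerAux
namespace SignalizerAux

open Pointwise Subgroup Finset

/-- Key counting argument: if a rank-2 "grid" of elements of `A` acts fixed-point-freely
on an abelian group `H`, then every element of `H` has order dividing `r`. -/
theorem pow_r_eq_one_of_fpf {r : ℕ} (hr : r.Prime) {A : Type*} [Group A] {H : Type*} [Group H]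
    [MulDistribMulAction A H] (hcomm : ∀ h₁ h₂ : H, h₁ * h₂ = h₂ * h₁)
    {x y : A} (hx : x ^ r = 1) (hy : y ^ r = 1) (hxy : Commute x y)
    (hfpf : ∀ i j : ℕ, ¬ (r ∣ i ∧ r ∣ j) → ∀ h : H, (x ^ i * y ^ j) • h = h → h = 1)
    (h : H) : h ^ r = 1 := by
  letI : CommGroup H := { ‹Group H› with mul_comm := hcomm }
  haveI : Fact r.Prime := ⟨hr⟩
  haveI : NeZero r := ⟨hr.ne_zero⟩
  have hord : ∀ z : A, z ^ r = 1 → ∀ m : ℕ, z ^ (m % r) = z ^ m :=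
    fun z hz m => (pow_eq_pow_mod m hz).symm
  -- the "norm" of a fixed-point-free element is trivial
  have norm_eq_one : ∀ z : A, z ^ r = 1 → (∀ h' : H, z • h' = h' → h' = 1) →
      ∀ h' : H, (∏ i : ZMod r, z ^ (i.val) • h') = 1 := by
    intro z hz hf h'
    apply hf
    have hsmul : z • (∏ i : ZMod r, z ^ i.val • h') = ∏ i : ZMod r, z ^ ((i + 1).val) • h' := by
      have hmap := map_prod (MulDistribMulAction.toMonoidHom H z)
        (fun i : ZMod r => z ^ i.val • h') Finset.univ
      simp only [MulDistribMulAction.toMonoidHom_apply] at hmap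
      rw [hmap]
      refine Finset.prod_congr rfl fun i _ => ?_
      rw [← mul_smul]
      congr 1
      rw [ZMod.val_add, hord z hz, pow_add, ZMod.val_one, pow_one]
      exact ((Commute.refl z).pow_right i.val).eq
    rw [hsmul]
    exact Equiv.prod_comp (Equiv.addRight (1 : ZMod r)) (fun i : ZMod r => z ^ i.val • h')
  set F : ZMod r → ZMod r → H := fun i k => (x ^ i.val * y ^ k.val) • h with hF
  have hP : ∀ k : ZMod r, (∏ i : ZMod r, F i k) = 1 := by
    intro k
    have hfz : ∀ h' : H, x • h' = h' → h' = 1 := by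
      intro h' hh
      refine hfpf 1 0 (fun hc => ?_) h' (by simpa using hh)
      exact hr.one_lt.ne' (Nat.dvd_one.mp hc.1)
    have hnorm := norm_eq_one x hx hfz (y ^ k.val • h)
    rw [← hnorm]
    refine Finset.prod_congr rfl fun i _ => ?_
    simp only [hF]
    rw [mul_smul]
  have hrows : ∀ i : ZMod r, (∏ k : ZMod r, F (i * k) k) = 1 := by
    intro i
    have hzpow : (x ^ i.val * y) ^ r = 1 := by
      rw [(hxy.pow_left i.val).mul_pow, ← pow_mul, mul_comm i.val r, pow_mul, hx, one_pow,
        one_mul, hy]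
    have hf : ∀ h' : H, (x ^ i.val * y) • h' = h' → h' = 1 := by
      intro h' hh
      refine hfpf i.val 1 (fun hc => ?_) h' (by simpa using hh)
      exact hr.one_lt.ne' (Nat.dvd_one.mp hc.2)
    have hnorm := norm_eq_one _ hzpow hf h
    rw [← hnorm]
    refine Finset.prod_congr rfl fun k _ => ?_
    simp only [hF]
    congr 1
    rw [(hxy.pow_left i.val).mul_pow, ← pow_mul, ZMod.val_mul, hord x hx, pow_mul]
  have hQ : (∏ k : ZMod r, ∏ i : ZMod r, F (i * k) k) = 1 := by
    rw [Finset.prod_comm]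
    exact Finset.prod_eq_one fun i _ => hrows i
  have hQ0 : (∏ i : ZMod r, F (i * 0) 0) = h ^ r := by
    have : ∀ i : ZMod r, F (i * 0) 0 = h := by
      intro i
      simp only [hF, mul_zero, ZMod.val_zero, pow_zero, one_mul, one_smul]
    rw [Finset.prod_congr rfl fun i _ => this i, Finset.prod_const, Finset.card_univ,
      ZMod.card]
  have hsplit := (Finset.mul_prod_erase Finset.univ
    (fun k => ∏ i : ZMod r, F (i * k) k) (Finset.mem_univ (0 : ZMod r))).symm
  rw [hQ] at hsplit
  have herase : (∏ k ∈ Finset.univ.erase (0 : ZMod r), ∏ i : ZMod r, F (i * k) k) = 1 := by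
    refine Finset.prod_eq_one fun k hk => ?_
    have hkne : k ≠ 0 := Finset.ne_of_mem_erase hk
    have h1 : (∏ i : ZMod r, F (i * k) k) = ∏ i : ZMod r, F i k :=
      Equiv.prod_comp (Equiv.mulRight₀ k hkne) fun i => F i k
    rw [h1]
    exact hP k
  rw [herase, mul_one] at hsplit
  rw [hQ0] at hsplit
  exact hsplit.symm

end SignalizerAux
namespace SignalizerAux

open Pointwise Subgroup

theorem mem_of_pow_mem {G : Type*} [Group G] {r : ℕ} (hr : r.Prime) (C : Subgroup G) {g : G}
    (hg : g ^ r = 1) {j : ℕ} (hj : ¬ r ∣ j) (h : g ^ j ∈ C) : g ∈ C := by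
  have hco : Nat.Coprime j r := Nat.coprime_comm.mp (hr.coprime_iff_not_dvd.mpr hj)
  obtain ⟨u, -, hu⟩ := Nat.exists_mul_mod_eq_one_of_coprime hco hr.one_lt
  have hmem : g ^ (j * u) ∈ C := by rw [pow_mul]; exact Subgroup.pow_mem C h u
  rwa [pow_eq_pow_mod (j * u) hg, hu, pow_one] at hmem

universe uH

/-- Coprime-action generation theorem: if a noncyclic finite elementary abelian `r`-group `A`
acts on a finite group `H` of order not divisible by `r`, then `H` is generated by the
fixed-point subgroups of the index-`r` subgroups of `A`. -/
theorem gen_aux {r : ℕ} (hr : r.Prime) {A : Type*} [Group A] [Finite A]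
    (hA : IsElementaryAbelian r A) (hnc : ¬ IsCyclic A) :
    ∀ (n : ℕ) (H : Type uH) [Group H] [Finite H] [MulDistribMulAction A H],
      Nat.card H ≤ n → ¬ r ∣ Nat.card H →
      ∀ x : H, x ∈ ⨆ (B : Subgroup A) (_ : B.index = r), fixedBySub A H B := by
  intro n
  induction n using Nat.strong_induction_on with
  | _ n IH =>
  intro H _ _ _ hn hndvd x
  haveI : Nontrivial A := by
    rcases subsingleton_or_nontrivial A with hs | hs
    · exact absurd isCyclic_of_subsingleton hnc
    · exact hs
  have hAcard : Nat.card A ≠ 1 := (Finite.one_lt_card_iff_nontrivial.mpr inferInstance).ne'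
  by_cases hH1 : Nat.card H = 1
  · haveI : Subsingleton H := (Nat.card_eq_one_iff_unique.mp hH1).1
    rw [Subsingleton.elim x 1]
    exact Subgroup.one_mem _
  haveI hHnt : Nontrivial H := Finite.one_lt_card_iff_nontrivial.mp
    (lt_of_le_of_ne Nat.card_pos (Ne.symm hH1))
  set S := ⨆ (B : Subgroup A) (_ : B.index = r), fixedBySub A H B with hS
  -- invariant proper subgroups lie in S
  have hsub : ∀ N : Subgroup H, (∀ a : A, a • N = N) → N ≠ ⊤ → ∀ z ∈ N, z ∈ S := by
    intro N hNinv hNtop z hz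
    letI : MulDistribMulAction A ↥N := subAction N hNinv
    have hcardN : Nat.card ↥N < n := by
      have hle : Nat.card ↥N ≤ Nat.card H :=
        Nat.le_of_dvd Nat.card_pos (Subgroup.card_subgroup_dvd_card N)
      have hne : Nat.card ↥N ≠ Nat.card H := fun h => hNtop (Subgroup.eq_top_of_card_eq _ h)
      omega
    have hnd : ¬ r ∣ Nat.card ↥N := fun h => hndvd (h.trans (Subgroup.card_subgroup_dvd_card N))
    have hz' := IH _ hcardN ↥N le_rfl hnd ⟨z, hz⟩
    have hcomp : (⨆ (B : Subgroup A) (_ : B.index = r), fixedBySub A ↥N B) ≤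
        Subgroup.comap N.subtype S := by
      refine iSup₂_le fun B hB => ?_
      intro w hw
      rw [Subgroup.mem_comap]
      have hwH : N.subtype w ∈ fixedBySub A H B := by
        rw [mem_fixedBySub]
        intro b hb
        exact congrArg Subtype.val (mem_fixedBySub.mp hw b hb)
      exact (le_iSup₂ (f := fun (B : Subgroup A) (_ : B.index = r) => fixedBySub A H B) B hB) hwH
    exact hcomp hz'
  by_cases hex : ∃ N : Subgroup H, N.Normal ∧ (∀ a : A, a • N = N) ∧ N ≠ ⊥ ∧ N ≠ ⊤
  · obtain ⟨N, hNorm, hNinv, hNbot, hNtop⟩ := hex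
    haveI := hNorm
    letI : MulDistribMulAction A (H ⧸ N) := quotAction N hNinv
    have h1 : Nat.card H = Nat.card (H ⧸ N) * Nat.card N :=
      Subgroup.card_eq_card_quotient_mul_card_subgroup N
    have hcardq : Nat.card (H ⧸ N) < n := by
      have h2 : 1 < Nat.card N := (Subgroup.one_lt_card_iff_ne_bot (H := N)).mpr hNbot
      have h3 : 0 < Nat.card (H ⧸ N) := Nat.card_pos
      calc Nat.card (H ⧸ N) < Nat.card (H ⧸ N) * Nat.card N :=
            (Nat.lt_mul_iff_one_lt_right h3).mpr h2
        _ = Nat.card H := h1.symm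
        _ ≤ n := hn
    have hndq : ¬ r ∣ Nat.card (H ⧸ N) := fun h => hndvd (h.trans ⟨Nat.card N, h1⟩)
    have hxq := IH _ hcardq (H ⧸ N) le_rfl hndq (QuotientGroup.mk x)
    have hkey : (⨆ (B : Subgroup A) (_ : B.index = r), fixedBySub A (H ⧸ N) B) ≤
        Subgroup.map (QuotientGroup.mk' N) S := by
      refine iSup₂_le fun B hB => ?_
      intro q hq
      rw [mem_fixedBySub] at hq
      obtain ⟨hpre, hmk, hfix⟩ := exists_fixed_preimage hr hA hndvd N B q (by
        intro b hb x' hx'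
        have hb' : (QuotientGroup.mk (b • x') : H ⧸ N) = b • (QuotientGroup.mk x' : H ⧸ N) := by
          show _ = QuotientGroup.map N N (MulDistribMulAction.toMonoidHom H b) _
            (QuotientGroup.mk x')
          rw [QuotientGroup.map_mk, MulDistribMulAction.toMonoidHom_apply]
        rw [hb', hx']
        exact hq b hb)
      refine ⟨hpre, ?_, hmk⟩
      exact (le_iSup₂ (f := fun (B : Subgroup A) (_ : B.index = r) => fixedBySub A H B) B hB)
        (mem_fixedBySub.mpr hfix)
    obtain ⟨s, hs, hmk⟩ := hkey hxq
    have hsx : s⁻¹ * x ∈ N := by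
      rw [QuotientGroup.mk'_apply] at hmk
      exact QuotientGroup.eq.mp hmk
    have hx' : x = s * (s⁻¹ * x) := by group
    rw [hx']
    exact S.mul_mem hs (hsub N hNinv hNtop _ hsx)
  · have hsimple : ∀ N : Subgroup H, N.Normal → (∀ a : A, a • N = N) → N = ⊥ ∨ N = ⊤ := by
      intro N h1 h2
      by_cases hb : N = ⊥
      · exact Or.inl hb
      · right
        by_contra ht
        exact hex ⟨N, h1, h2, hb, ht⟩
    let K : Subgroup A :=
      { carrier := {c : A | ∀ h : H, c • h = h}
        one_mem' := fun h => one_smul A h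
        mul_mem' := by
          intro c d hc hd h
          rw [mul_smul, hd h, hc h]
        inv_mem' := by
          intro c hc h
          conv_lhs => rw [← hc h]
          exact inv_smul_smul c h }
    have hmemK : ∀ c : A, c ∈ K ↔ ∀ h : H, c • h = h := fun c => Iff.rfl
    by_cases hKB : ∃ B : Subgroup A, B.index = r ∧ B ≤ K
    · obtain ⟨B, hBi, hBK⟩ := hKB
      have hxB : x ∈ fixedBySub A H B := mem_fixedBySub.mpr fun b hb => hBK hb x
      exact (le_iSup₂ (f := fun (B : Subgroup A) (_ : B.index = r) => fixedBySub A H B) B hBi) hxB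
    · push_neg at hKB
      haveI hKnormal : K.Normal := ⟨fun m hm g => by
        rw [hA.1 g m, mul_assoc, mul_inv_cancel, mul_one]; exact hm⟩
      have hKtop : K ≠ ⊤ := by
        intro h
        obtain ⟨B, hB⟩ := exists_index_r hr (Nat.card A) A le_rfl hA hAcard
        exact hKB B hB (h ▸ le_top)
      have hKidx : ∀ c : A, c ∉ K → K ⊔ Subgroup.zpowers c ≠ ⊤ := by
        intro c _ htop
        have hmapz : Subgroup.zpowers ((QuotientGroup.mk' K) c) = ⊤ := by
          have h1 : Subgroup.map (QuotientGroup.mk' K) (K ⊔ Subgroup.zpowers c) = ⊤ := by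
            rw [htop]
            exact Subgroup.map_top_of_surjective _ (QuotientGroup.mk'_surjective K)
          rwa [Subgroup.map_sup, QuotientGroup.map_mk'_self, bot_sup_eq,
            MonoidHom.map_zpowers] at h1
        have hcardq : Nat.card (A ⧸ K) = orderOf ((QuotientGroup.mk' K) c) := by
          rw [← Nat.card_zpowers, hmapz, Subgroup.card_top]
        have hdvd : K.index ∣ r := by
          show Nat.card (A ⧸ K) ∣ r
          rw [hcardq]
          exact orderOf_dvd_of_pow_eq_one (by rw [← map_pow, hA.2, map_one])
        rcases hr.eq_one_or_self_of_dvd _ hdvd with h1 | h1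
        · exact hKtop (Subgroup.index_eq_one.mp h1)
        · exact hKB K h1 le_rfl
      obtain ⟨x₀, hx₀⟩ : ∃ c : A, c ∉ K := by
        by_contra hcon
        push_neg at hcon
        exact hKtop ((Subgroup.eq_top_iff' K).mpr hcon)
      obtain ⟨y₀, hy₀⟩ : ∃ c : A, c ∉ K ⊔ Subgroup.zpowers x₀ := by
        by_contra hcon
        push_neg at hcon
        exact hKidx x₀ hx₀ ((Subgroup.eq_top_iff' _).mpr hcon)
      have hzK : ∀ i j : ℕ, ¬ (r ∣ i ∧ r ∣ j) → x₀ ^ i * y₀ ^ j ∉ K := by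
        intro i j hij hmem
        by_cases hj : r ∣ j
        · have hyj : y₀ ^ j = 1 := by
            obtain ⟨m, rfl⟩ := hj
            rw [pow_mul, hA.2, one_pow]
          rw [hyj, mul_one] at hmem
          have hi : ¬ r ∣ i := fun h => hij ⟨h, hj⟩
          exact hx₀ (mem_of_pow_mem hr K (hA.2 x₀) hi hmem)
        · apply hy₀
          have hyj : y₀ ^ j ∈ K ⊔ Subgroup.zpowers x₀ := by
            have hsplit : y₀ ^ j = (x₀ ^ i)⁻¹ * (x₀ ^ i * y₀ ^ j) := by group
            rw [hsplit]
            exact Subgroup.mul_mem _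
              (Subgroup.inv_mem _ (Subgroup.mem_sup_right (Subgroup.pow_mem _ (Subgroup.mem_zpowers x₀) i)))
              (Subgroup.mem_sup_left hmem)
          exact mem_of_pow_mem hr _ (hA.2 y₀) hj hyj
      by_cases hcomm : ∀ h₁ h₂ : H, h₁ * h₂ = h₂ * h₁
      · exfalso
        have hfpf : ∀ i j : ℕ, ¬ (r ∣ i ∧ r ∣ j) → ∀ h : H, (x₀ ^ i * y₀ ^ j) • h = h → h = 1 := by
          intro i j hij h hfix
          set z := x₀ ^ i * y₀ ^ j with hz
          have hstep : ∀ (d : A) (w : H), z • w = w → z • (d • w) = d • w := by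
            intro d w hw
            rw [← mul_smul, hA.1 z d, mul_smul, hw]
          have hinv : ∀ c : A, c • fixedSub H z = fixedSub H z := by
            intro c
            ext w
            rw [Subgroup.mem_pointwise_smul_iff_inv_smul_mem]
            constructor
            · intro hwmem
              have := hstep c _ hwmem
              rwa [smul_inv_smul] at this
            · intro hwmem
              exact hstep c⁻¹ w hwmem
          have hnormal : (fixedSub H z).Normal := ⟨fun m hm g => by
            rw [hcomm g m, mul_assoc, mul_inv_cancel, mul_one]; exact hm⟩
          rcases hsimple (fixedSub H z) hnormal hinv with hbot | htop2
          · have : h ∈ fixedSub H z := hfix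
            rw [hbot] at this
            exact Subgroup.mem_bot.mp this
          · refine absurd ?_ (hzK i j hij)
            rw [hmemK]
            intro h'
            exact (htop2 ▸ Subgroup.mem_top h' : h' ∈ fixedSub H z)
        have hpow := pow_r_eq_one_of_fpf hr hcomm (hA.2 x₀) (hA.2 y₀) (hA.1 x₀ y₀) hfpf
        obtain ⟨w, hw⟩ := exists_ne (1 : H)
        have h2 : orderOf w ∣ r := orderOf_dvd_of_pow_eq_one (hpow w)
        have h3 : orderOf w ∣ Nat.card H := orderOf_dvd_natCard w
        rcases hr.eq_one_or_self_of_dvd _ h2 with h4 | h4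
        · exact hw (orderOf_eq_one_iff.mp h4)
        · exact hndvd (h4 ▸ h3)
      · have hStop : S = ⊤ := by
          apply eq_top_of_sylows_le
          intro q hq _
          haveI : Fact q.Prime := ⟨hq⟩
          obtain ⟨Q, hQinv⟩ := exists_invariant_sylow hr hA hndvd q
          have hQtop : Q.toSubgroup ≠ ⊤ := by
            intro htopQ
            have hpg : IsPGroup q H := by
              intro g
              have hgmem : g ∈ Q.toSubgroup := htopQ ▸ Subgroup.mem_top g
              obtain ⟨k, hk⟩ := Q.2 ⟨g, hgmem⟩
              exact ⟨k, by simpa using congrArg Subtype.val hk⟩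
            haveI hcnt := hpg.center_nontrivial
            have hcbot : Subgroup.center H ≠ ⊥ := (Subgroup.center H).nontrivial_iff_ne_bot.mp hcnt
            have hctop : Subgroup.center H ≠ ⊤ := by
              intro h
              apply hcomm
              intro h₁ h₂
              exact Subgroup.mem_center_iff.mp (h ▸ Subgroup.mem_top h₂) h₁
            have hcstep : ∀ (d : A) (w : H), w ∈ Subgroup.center H → d • w ∈ Subgroup.center H := by
              intro d w hw
              rw [Subgroup.mem_center_iff]
              intro g
              have : g = d • (d⁻¹ • g) := (smul_inv_smul d g).symm
              rw [this, ← smul_mul', ← smul_mul', Subgroup.mem_center_iff.mp hw]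
            have hcinv : ∀ c : A, c • Subgroup.center H = Subgroup.center H := by
              intro c
              ext w
              rw [Subgroup.mem_pointwise_smul_iff_inv_smul_mem]
              constructor
              · intro hwmem
                have := hcstep c _ hwmem
                rwa [smul_inv_smul] at this
              · intro hwmem
                exact hcstep c⁻¹ w hwmem
            rcases hsimple (Subgroup.center H) inferInstance hcinv with h | h
            · exact hcbot h
            · exact hctop h
          refine ⟨Q.toSubgroup, Q.card_eq_multiplicity, fun w hw => ?_⟩
          exact hsub Q.toSubgroup hQinv hQtop w hw
        rw [hS] at hStop ⊢
        rw [hStop]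
        exact Subgroup.mem_top x

end SignalizerAux
open SignalizerAux in
/-- For an `A`-signalizer functor `θ` with `A` a noncyclic elementary abelian
`r`-group, `θ(a) = ⟨θ(B) : B ∈ hyp(A), a ∈ B⟩` for every `a ∈ A∖{1}`. -/
theorem theta_eq_iSup_thetaB
    {A G : Type*} [Group A] [Finite A] [Group G] [MulDistribMulAction A G]
    (r : ℕ) (hr : r.Prime) (hA : IsElementaryAbelian r A) (hnc : ¬ IsCyclic A)
    (θ : A → Subgroup G) (hθ : IsSignalizerFunctorOn ⊤ θ) :
    ∀ a : A, a ≠ 1 →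
      θ a = ⨆ (B : Subgroup A) (_ : B.index = r ∧ a ∈ B), thetaB θ B := by
  intro a ha
  obtain ⟨hfin, hinv, hle, hcop, hmin⟩ := hθ a (Subgroup.mem_top a) ha
  refine le_antisymm ?_ ?_
  · -- θ a ≤ ⨆ ...
    haveI : Finite ↥(θ a) := hfin
    letI : MulDistribMulAction A ↥(θ a) := subAction (θ a) (fun c => hinv c (Subgroup.mem_top c))
    haveI : Nontrivial A := by
      rcases subsingleton_or_nontrivial A with hs | hs
      · exact absurd isCyclic_of_subsingleton hnc
      · exact hs
    have hrA : r ∣ Nat.card A := by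
      obtain ⟨c, hc⟩ := exists_ne (1 : A)
      rw [← orderOf_eq_of_elemAb hr hA hc]
      exact orderOf_dvd_natCard c
    have hnd : ¬ r ∣ Nat.card ↥(θ a) := by
      intro hdvd
      have h1 : r ∣ Nat.gcd (Nat.card ↥(θ a)) (Nat.card (⊤ : Subgroup A)) :=
        Nat.dvd_gcd hdvd (by rw [Subgroup.card_top]; exact hrA)
      rw [hcop] at h1
      exact hr.one_lt.ne' (Nat.dvd_one.mp h1)
    intro x hx
    have hgen := gen_aux hr hA hnc (Nat.card ↥(θ a)) ↥(θ a) le_rfl hnd ⟨x, hx⟩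
    have hmap : ∀ B : Subgroup A, B.index = r →
        fixedBySub A ↥(θ a) B ≤ Subgroup.comap (θ a).subtype
          (⨆ (B' : Subgroup A) (_ : B'.index = r ∧ a ∈ B'), thetaB θ B') := by
      intro B hB
      intro w hw
      rw [Subgroup.mem_comap]
      have hwmem : ((θ a).subtype w : G) ∈ θ a := w.2
      have hfixG : ∀ b ∈ B, b • ((θ a).subtype w : G) = (θ a).subtype w :=
        fun b hb => congrArg Subtype.val (mem_fixedBySub.mp hw b hb)
      by_cases haB : a ∈ B
      · have hth : ((θ a).subtype w : G) ∈ thetaB θ B := by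
          refine Subgroup.mem_iInf.mpr fun b => Subgroup.mem_iInf.mpr fun hb => ?_
          exact hmin b (Subgroup.mem_top b) hb.2 ⟨hwmem, hfixG b hb.1⟩
        exact (le_iSup₂ (f := fun (B' : Subgroup A) (_ : B'.index = r ∧ a ∈ B') => thetaB θ B')
          B ⟨hB, haB⟩) hth
      · obtain ⟨B', hB', haB'⟩ := exists_index_r_mem hr hA hnc ha
        have hstab : ∀ c : A, c • ((θ a).subtype w : G) = (θ a).subtype w := by
          have h1 : B ⊔ Subgroup.zpowers a ≤ MulAction.stabilizer A ((θ a).subtype w : G) := by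
            refine sup_le (fun b hb => hfixG b hb) ?_
            rw [Subgroup.zpowers_le]
            exact hle hwmem
          have h2 : B ⊔ Subgroup.zpowers a = ⊤ := sup_zpowers_eq_top hr hB haB
          intro c
          exact (h2 ▸ h1) (Subgroup.mem_top c)
        have hth : ((θ a).subtype w : G) ∈ thetaB θ B' := by
          refine Subgroup.mem_iInf.mpr fun b => Subgroup.mem_iInf.mpr fun hb => ?_
          exact hmin b (Subgroup.mem_top b) hb.2 ⟨hwmem, hstab b⟩
        exact (le_iSup₂ (f := fun (B' : Subgroup A) (_ : B'.index = r ∧ a ∈ B') => thetaB θ B')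
          B' ⟨hB', haB'⟩) hth
    have hfinal := iSup₂_le hmap
    have := hfinal hgen
    rwa [Subgroup.mem_comap] at this
  · refine iSup_le fun B => iSup_le fun hB => ?_
    exact le_trans (iInf_le _ a) (iInf_le _ ⟨hB.2, ha⟩)
end
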